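/- arXiv:0904.1530 — 7 statements merged into one kernel-verified Lean document; each statement's English description precedes it below -/
import Mathlib

section
/- Modified Pythagorean relation: let 0 < q < 1, α = 1 − 2q, κ = q(1−q), and let p, b, r ∈ 𝒮ⁿ. Let γ : [0,1] → 𝒮ⁿ be a C¹ curve with γ(0) = b, γ(1) = p such that γ_i(t)^q = a(t) b_i^q + c(t) p_i^q for all i and t, for some C¹ functions a, c ≥ 0 (a ∇^{(α)}-geodesic from b to p), and let δ : [0,1] → 𝒮ⁿ be a C¹ curve with δ(0) = b, δ(1) = r such that δ_i(t)^{1−q} = ã(t) b_i^{1−q} + c̃(t) r_i^{1−q} for some C¹ functions ã, c̃ ≥ 0 (a ∇^{(−α)}-geodesic from b to r). Assume γ'(0) ≠ 0, δ'(0) ≠ 0 and that the two curves are orthogonal at b with respect to the Fisher metric, i.e. Σ_i γ_i'(0) δ_i'(0)/b_i = 0. Then D^{(α)}(p,r) = D^{(α)}(p,b) + D^{(α)}(b,r) − κ D^{(α)}(p,b) D^{(α)}(b,r). -/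
open Set

/-- The α-divergence with `q = (1-α)/2`:
`D^{(α)}(p,r) = (1/(q(1-q))) * (1 - ∑ i, p i ^ q * r i ^ (1-q))`. -/
noncomputable def alphaDiv {ι : Type*} [Fintype ι] (q : ℝ) (p r : ι → ℝ) : ℝ :=
  (1 / (q * (1 - q))) * (1 - ∑ i, p i ^ q * r i ^ (1 - q))

theorem aux_deriv (s : ℝ) (hs : 0 < s) (f a c : ℝ → ℝ) (B P : ℝ) (hB : 0 < B)
    (hf : ContDiffOn ℝ 1 f (Icc 0 1)) (haC : ContDiffOn ℝ 1 a (Icc 0 1))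
    (hcC : ContDiffOn ℝ 1 c (Icc 0 1)) (hf0 : f 0 = B)
    (heq : ∀ t ∈ Icc (0:ℝ) 1, f t ^ s = a t * B ^ s + c t * P ^ s) :
    derivWithin f (Icc 0 1) 0
      = (derivWithin a (Icc 0 1) 0 * B ^ s + derivWithin c (Icc 0 1) 0 * P ^ s)
        * B ^ (1 - s) / s := by
  have h0 : (0:ℝ) ∈ Icc (0:ℝ) 1 := ⟨le_refl _, by norm_num⟩
  have hU : UniqueDiffWithinAt ℝ (Icc (0:ℝ) 1) 0 := (uniqueDiffOn_Icc one_pos) 0 h0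
  have hfd : HasDerivWithinAt f (derivWithin f (Icc 0 1) 0) (Icc 0 1) 0 :=
    ((hf.differentiableOn one_ne_zero) 0 h0).hasDerivWithinAt
  have had : HasDerivWithinAt a (derivWithin a (Icc 0 1) 0) (Icc 0 1) 0 :=
    ((haC.differentiableOn one_ne_zero) 0 h0).hasDerivWithinAt
  have hcd : HasDerivWithinAt c (derivWithin c (Icc 0 1) 0) (Icc 0 1) 0 :=
    ((hcC.differentiableOn one_ne_zero) 0 h0).hasDerivWithinAt
  have h1 : HasDerivWithinAt (fun t => f t ^ s)
      (derivWithin f (Icc 0 1) 0 * s * f 0 ^ (s - 1)) (Icc 0 1) 0 :=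
    hfd.rpow_const (Or.inl (by rw [hf0]; exact hB.ne'))
  have h2 : HasDerivWithinAt (fun t => a t * B ^ s + c t * P ^ s)
      (derivWithin a (Icc 0 1) 0 * B ^ s + derivWithin c (Icc 0 1) 0 * P ^ s) (Icc 0 1) 0 :=
    (had.mul_const _).add (hcd.mul_const _)
  have h2' : HasDerivWithinAt (fun t => f t ^ s)
      (derivWithin a (Icc 0 1) 0 * B ^ s + derivWithin c (Icc 0 1) 0 * P ^ s) (Icc 0 1) 0 :=
    h2.congr (fun t ht => heq t ht) (heq 0 h0)
  have e : derivWithin f (Icc 0 1) 0 * s * f 0 ^ (s - 1)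
      = derivWithin a (Icc 0 1) 0 * B ^ s + derivWithin c (Icc 0 1) 0 * P ^ s :=
    (h1.derivWithin hU).symm.trans (h2'.derivWithin hU)
  rw [hf0] at e
  have key : B ^ (s - 1) * B ^ (1 - s) = 1 := by
    rw [← Real.rpow_add hB]
    norm_num
  rw [← e, mul_assoc (derivWithin f (Icc 0 1) 0 * s), key, mul_one, mul_div_assoc,
    div_self hs.ne', mul_one]

/-- Modified Pythagorean relation: if the `∇^{(α)}`-geodesic `γ` from `b` to `p` and the
`∇^{(-α)}`-geodesic `δ` from `b` to `r` are orthogonal at `b` with respect to the Fisher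
metric, then
`D^{(α)}(p,r) = D^{(α)}(p,b) + D^{(α)}(b,r) - κ D^{(α)}(p,b) D^{(α)}(b,r)` with `κ = q(1-q)`,
`α = 1 - 2q`. -/
theorem modified_pythagorean (n : ℕ) (q α κ : ℝ) (hq0 : 0 < q) (hq1 : q < 1)
    (hα : α = 1 - 2 * q) (hκ : κ = q * (1 - q))
    (p b r : Fin (n + 1) → ℝ)
    (hp : (∀ i, 0 < p i) ∧ ∑ i, p i = 1)
    (hb : (∀ i, 0 < b i) ∧ ∑ i, b i = 1)
    (hr : (∀ i, 0 < r i) ∧ ∑ i, r i = 1)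
    (γ δ : ℝ → Fin (n + 1) → ℝ) (a c ta tc : ℝ → ℝ)
    (hγmem : ∀ t ∈ Icc (0:ℝ) 1, (∀ i, 0 < γ t i) ∧ ∑ i, γ t i = 1)
    (hδmem : ∀ t ∈ Icc (0:ℝ) 1, (∀ i, 0 < δ t i) ∧ ∑ i, δ t i = 1)
    (hγ0 : γ 0 = b) (hγ1 : γ 1 = p) (hδ0 : δ 0 = b) (hδ1 : δ 1 = r)
    (hγC1 : ∀ i, ContDiffOn ℝ 1 (fun t => γ t i) (Icc 0 1))
    (hδC1 : ∀ i, ContDiffOn ℝ 1 (fun t => δ t i) (Icc 0 1))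
    (haC1 : ContDiffOn ℝ 1 a (Icc 0 1)) (hcC1 : ContDiffOn ℝ 1 c (Icc 0 1))
    (htaC1 : ContDiffOn ℝ 1 ta (Icc 0 1)) (htcC1 : ContDiffOn ℝ 1 tc (Icc 0 1))
    (ha_nonneg : ∀ t ∈ Icc (0:ℝ) 1, 0 ≤ a t) (hc_nonneg : ∀ t ∈ Icc (0:ℝ) 1, 0 ≤ c t)
    (hta_nonneg : ∀ t ∈ Icc (0:ℝ) 1, 0 ≤ ta t) (htc_nonneg : ∀ t ∈ Icc (0:ℝ) 1, 0 ≤ tc t)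
    (hγgeo : ∀ t ∈ Icc (0:ℝ) 1, ∀ i, γ t i ^ q = a t * b i ^ q + c t * p i ^ q)
    (hδgeo : ∀ t ∈ Icc (0:ℝ) 1, ∀ i,
      δ t i ^ (1 - q) = ta t * b i ^ (1 - q) + tc t * r i ^ (1 - q))
    (hγ' : (fun i => derivWithin (fun t => γ t i) (Icc 0 1) 0) ≠ 0)
    (hδ' : (fun i => derivWithin (fun t => δ t i) (Icc 0 1) 0) ≠ 0)
    (horth : ∑ i, derivWithin (fun t => γ t i) (Icc 0 1) 0
        * derivWithin (fun t => δ t i) (Icc 0 1) 0 / b i = 0) :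
    alphaDiv q p r = alphaDiv q p b + alphaDiv q b r
      - κ * (alphaDiv q p b * alphaDiv q b r) := by
  have h0 : (0:ℝ) ∈ Icc (0:ℝ) 1 := ⟨le_refl _, by norm_num⟩
  have hU : UniqueDiffWithinAt ℝ (Icc (0:ℝ) 1) 0 := (uniqueDiffOn_Icc one_pos) 0 h0
  have hq1' : 0 < 1 - q := by linarith
  set A' := derivWithin a (Icc 0 1) 0 with hA'
  set C' := derivWithin c (Icc 0 1) 0 with hC'
  set TA' := derivWithin ta (Icc 0 1) 0 with hTA'
  set TC' := derivWithin tc (Icc 0 1) 0 with hTC'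
  set X := ∑ i, p i ^ q * b i ^ (1 - q) with hX
  set Y := ∑ i, b i ^ q * r i ^ (1 - q) with hY
  set Z := ∑ i, p i ^ q * r i ^ (1 - q) with hZ
  -- power identities
  have hbq : ∀ i, b i ^ q * b i ^ (1 - q) = b i := fun i => by
    rw [← Real.rpow_add (hb.1 i)]
    norm_num
  have hbq' : ∀ i, b i ^ (1 - q) * b i ^ q = b i := fun i => by
    rw [mul_comm]; exact hbq i
  -- derivative formulas
  have hgi : ∀ i, derivWithin (fun t => γ t i) (Icc 0 1) 0
      = (A' * b i ^ q + C' * p i ^ q) * b i ^ (1 - q) / q := fun i =>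
    aux_deriv q hq0 (fun t => γ t i) a c (b i) (p i) (hb.1 i) (hγC1 i) haC1 hcC1
      (congrFun hγ0 i) (fun t ht => hγgeo t ht i)
  have hdi : ∀ i, derivWithin (fun t => δ t i) (Icc 0 1) 0
      = (TA' * b i ^ (1 - q) + TC' * r i ^ (1 - q)) * b i ^ q / (1 - q) := fun i => by
    have h := aux_deriv (1 - q) hq1' (fun t => δ t i) ta tc (b i) (r i) (hb.1 i) (hδC1 i)
      htaC1 htcC1 (congrFun hδ0 i) (fun t ht => hδgeo t ht i)
    rwa [show (1:ℝ) - (1 - q) = q from by ring] at h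
  -- sum of derivatives is zero (γ)
  have hsumg : ∑ i, derivWithin (fun t => γ t i) (Icc 0 1) 0 = 0 := by
    have hconst : HasDerivWithinAt (fun t => ∑ i, γ t i) 0 (Icc 0 1) 0 :=
      (hasDerivWithinAt_const (0:ℝ) (Icc (0:ℝ) 1) (1:ℝ)).congr
        (fun t ht => (hγmem t ht).2) ((hγmem 0 h0).2)
    have hsum : HasDerivWithinAt (fun t => ∑ i, γ t i)
        (∑ i, derivWithin (fun t => γ t i) (Icc 0 1) 0) (Icc 0 1) 0 :=
      HasDerivWithinAt.fun_sum fun i _ =>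
        (((hγC1 i).differentiableOn one_ne_zero) 0 h0).hasDerivWithinAt
    exact (hsum.derivWithin hU).symm.trans (hconst.derivWithin hU)
  have hsumd : ∑ i, derivWithin (fun t => δ t i) (Icc 0 1) 0 = 0 := by
    have hconst : HasDerivWithinAt (fun t => ∑ i, δ t i) 0 (Icc 0 1) 0 :=
      (hasDerivWithinAt_const (0:ℝ) (Icc (0:ℝ) 1) (1:ℝ)).congr
        (fun t ht => (hδmem t ht).2) ((hδmem 0 h0).2)
    have hsum : HasDerivWithinAt (fun t => ∑ i, δ t i)
        (∑ i, derivWithin (fun t => δ t i) (Icc 0 1) 0) (Icc 0 1) 0 :=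
      HasDerivWithinAt.fun_sum fun i _ =>
        (((hδC1 i).differentiableOn one_ne_zero) 0 h0).hasDerivWithinAt
    exact (hsum.derivWithin hU).symm.trans (hconst.derivWithin hU)
  -- A' = -(C' * X)
  have hsum2 : ∑ i, derivWithin (fun t => γ t i) (Icc 0 1) 0 = (A' + C' * X) / q := by
    calc ∑ i, derivWithin (fun t => γ t i) (Icc 0 1) 0
        = ∑ i, (A' * b i + C' * (p i ^ q * b i ^ (1 - q))) / q := by
          refine Finset.sum_congr rfl fun i _ => ?_
          rw [hgi i, add_mul, mul_assoc, mul_assoc, hbq i]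
      _ = (A' * ∑ i, b i + C' * X) / q := by
          rw [← Finset.sum_div, Finset.sum_add_distrib, ← Finset.mul_sum, ← Finset.mul_sum]
      _ = (A' + C' * X) / q := by rw [hb.2, mul_one]
  have hA0 : A' = -(C' * X) := by
    have h := hsum2.symm.trans hsumg
    field_simp at h
    linarith
  have hsum3 : ∑ i, derivWithin (fun t => δ t i) (Icc 0 1) 0 = (TA' + TC' * Y) / (1 - q) := by
    calc ∑ i, derivWithin (fun t => δ t i) (Icc 0 1) 0
        = ∑ i, (TA' * b i + TC' * (b i ^ q * r i ^ (1 - q))) / (1 - q) := by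
          refine Finset.sum_congr rfl fun i _ => ?_
          rw [hdi i, add_mul, mul_assoc, mul_assoc, hbq' i, mul_comm (r i ^ (1 - q))]
      _ = (TA' * ∑ i, b i + TC' * Y) / (1 - q) := by
          rw [← Finset.sum_div, Finset.sum_add_distrib, ← Finset.mul_sum, ← Finset.mul_sum]
      _ = (TA' + TC' * Y) / (1 - q) := by rw [hb.2, mul_one]
  have hTA0 : TA' = -(TC' * Y) := by
    have h := hsum3.symm.trans hsumd
    field_simp at h
    linarith
  -- rewrite orthogonality
  have horth2 : ∑ i, (A' * b i ^ q + C' * p i ^ q)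
      * (TA' * b i ^ (1 - q) + TC' * r i ^ (1 - q)) / (q * (1 - q)) = 0 := by
    rw [← horth]
    refine Finset.sum_congr rfl fun i _ => ?_
    rw [hgi i, hdi i, div_mul_div_comm, div_div,
      show (A' * b i ^ q + C' * p i ^ q) * b i ^ (1 - q)
          * ((TA' * b i ^ (1 - q) + TC' * r i ^ (1 - q)) * b i ^ q)
        = (A' * b i ^ q + C' * p i ^ q) * (TA' * b i ^ (1 - q) + TC' * r i ^ (1 - q))
          * (b i ^ (1 - q) * b i ^ q) from by ring,
      hbq' i, mul_div_mul_right _ _ (hb.1 i).ne']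
  have horth3 : A' * TA' + A' * (TC' * Y) + C' * TA' * X + C' * TC' * Z = 0 := by
    have hexp : ∑ i, (A' * b i ^ q + C' * p i ^ q)
        * (TA' * b i ^ (1 - q) + TC' * r i ^ (1 - q))
      = A' * TA' * ∑ i, b i + A' * TC' * Y + C' * TA' * X + C' * TC' * Z := by
      calc ∑ i, (A' * b i ^ q + C' * p i ^ q) * (TA' * b i ^ (1 - q) + TC' * r i ^ (1 - q))
          = ∑ i, (A' * TA' * b i + (A' * TC' * (b i ^ q * r i ^ (1 - q))
              + (C' * TA' * (p i ^ q * b i ^ (1 - q))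
              + C' * TC' * (p i ^ q * r i ^ (1 - q))))) := by
            refine Finset.sum_congr rfl fun i _ => ?_
            rw [show (A' * b i ^ q + C' * p i ^ q)
                * (TA' * b i ^ (1 - q) + TC' * r i ^ (1 - q))
              = A' * TA' * (b i ^ q * b i ^ (1 - q)) + (A' * TC' * (b i ^ q * r i ^ (1 - q))
                + (C' * TA' * (p i ^ q * b i ^ (1 - q))
                + C' * TC' * (p i ^ q * r i ^ (1 - q)))) from by ring, hbq i]
        _ = A' * TA' * ∑ i, b i + A' * TC' * Y + C' * TA' * X + C' * TC' * Z := by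
            rw [Finset.sum_add_distrib, Finset.sum_add_distrib, Finset.sum_add_distrib,
              ← Finset.mul_sum, ← Finset.mul_sum, ← Finset.mul_sum, ← Finset.mul_sum]
            ring
    have h := horth2
    rw [← Finset.sum_div, hexp, hb.2, mul_one, div_eq_zero_iff] at h
    rcases h with h | h
    · linarith
    · exact absurd h (by positivity)
  -- nonvanishing of C', TC'
  have hC0ne : C' ≠ 0 := by
    intro h
    apply hγ'
    funext i
    rw [hgi i, hA0, h]
    simp
  have hTC0ne : TC' ≠ 0 := by
    intro h
    apply hδ'
    funext i
    rw [hdi i, hTA0, h]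
    simp
  -- conclude Z = X * Y
  have hfactor : C' * TC' * (Z - X * Y) = 0 := by
    rw [hA0, hTA0] at horth3
    linear_combination horth3
  have hZXY : Z = X * Y := by
    rcases mul_eq_zero.mp hfactor with h | h
    · exact absurd h (mul_ne_zero hC0ne hTC0ne)
    · linarith
  -- final algebra
  simp only [alphaDiv]
  rw [← hX, ← hY, ← hZ, hZXY, hκ]
  have hκne : q * (1 - q) ≠ 0 := by positivity
  field_simp
  ring
end

section
/- α-convexity of the q-expectation constraint set: let 0 < q < 1, let A_1,…,A_{n+1} be reals and Ā ≥ 0. If p, r ∈ 𝒮ⁿ satisfy Σ_i p_i^q A_i ≥ Ā and Σ_i r_i^q A_i ≥ Ā, and s ∈ 𝒮ⁿ satisfies s_i^q = β₁ p_i^q + β₂ r_i^q for all i, for some β₁, β₂ ≥ 0, then Σ_i s_i^q A_i ≥ Ā. (That is, the set ℋ_q⁺ = {p ∈ 𝒮ⁿ : ⟨A⟩_q ≥ Ā} is ∇^{(α)}-convex, where ⟨A⟩_q = Σ_i p_i^q A_i.) -/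
open Real

lemma aux_concave (q : ℝ) (hq0 : 0 < q) (hq1 : q < 1) (a b β₁ β₂ : ℝ)
    (ha : 0 ≤ a) (hb : 0 ≤ b) (hβ₁ : 0 ≤ β₁) (hβ₂ : 0 ≤ β₂) (ht : β₁ + β₂ ≤ 1) :
    β₁ * a ^ q + β₂ * b ^ q ≤ (β₁ * a + β₂ * b) ^ q := by
  set t := β₁ + β₂ with htdef
  rcases eq_or_lt_of_le (by positivity : (0:ℝ) ≤ t) with h0 | h0
  · have h1 : β₁ = 0 := by nlinarith
    have h2 : β₂ = 0 := by nlinarith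
    simp [h1, h2]
    positivity
  · have hconc := Real.concaveOn_rpow (le_of_lt hq0) (le_of_lt hq1)
    have hmem1 : a ∈ Set.Ici (0:ℝ) := ha
    have hmem2 : b ∈ Set.Ici (0:ℝ) := hb
    have hw1 : 0 ≤ β₁ / t := by positivity
    have hw2 : 0 ≤ β₂ / t := by positivity
    have hwsum : β₁ / t + β₂ / t = 1 := by field_simp; exact htdef.symm
    have hjen := hconc.2 hmem1 hmem2 hw1 hw2 hwsum
    simp only [smul_eq_mul] at hjen
    -- hjen : β₁/t * a^q + β₂/t * b^q ≤ (β₁/t*a + β₂/t*b)^q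
    have hm : 0 ≤ β₁ / t * a + β₂ / t * b := by positivity
    have key : β₁ * a + β₂ * b = t * (β₁ / t * a + β₂ / t * b) := by
      field_simp
    calc β₁ * a ^ q + β₂ * b ^ q
        = t * (β₁ / t * a ^ q + β₂ / t * b ^ q) := by field_simp
      _ ≤ t * (β₁ / t * a + β₂ / t * b) ^ q := by
          exact mul_le_mul_of_nonneg_left hjen (le_of_lt h0)
      _ ≤ t ^ q * (β₁ / t * a + β₂ / t * b) ^ q := by
          have : t ≤ t ^ q := by
            nth_rewrite 1 [← Real.rpow_one t]
            exact Real.rpow_le_rpow_of_exponent_ge h0 ht (le_of_lt hq1)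
          exact mul_le_mul_of_nonneg_right this (Real.rpow_nonneg hm q)
      _ = (β₁ * a + β₂ * b) ^ q := by
          rw [key, Real.mul_rpow (le_of_lt h0) hm]

/-- α-convexity of the q-expectation constraint set `ℋ_q⁺ = {p : ⟨A⟩_q ≥ Ā}` for
`0 < q < 1` and `Ā ≥ 0`: any point `s` of the `∇^{(α)}`-geodesic through two points
`p, r` of `ℋ_q⁺` again lies in `ℋ_q⁺`. -/
theorem q_expectation_set_alpha_convex (n : ℕ) (q : ℝ) (hq0 : 0 < q) (hq1 : q < 1)
    (A : Fin (n + 1) → ℝ) (Abar : ℝ) (hAbar : 0 ≤ Abar)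
    (p r s : Fin (n + 1) → ℝ)
    (hp_pos : ∀ i, 0 < p i) (hp_sum : ∑ i, p i = 1)
    (hr_pos : ∀ i, 0 < r i) (hr_sum : ∑ i, r i = 1)
    (hs_pos : ∀ i, 0 < s i) (hs_sum : ∑ i, s i = 1)
    (hpA : Abar ≤ ∑ i, p i ^ q * A i) (hrA : Abar ≤ ∑ i, r i ^ q * A i)
    (β₁ β₂ : ℝ) (hβ₁ : 0 ≤ β₁) (hβ₂ : 0 ≤ β₂)
    (hgeo : ∀ i, s i ^ q = β₁ * p i ^ q + β₂ * r i ^ q) :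
    Abar ≤ ∑ i, s i ^ q * A i := by
  have hsum1 : 1 ≤ β₁ + β₂ := by
    by_contra hlt
    push_neg at hlt
    have hle : ∀ i, s i ≤ β₁ * p i + β₂ * r i := by
      intro i
      have h1 : s i ^ q ≤ (β₁ * p i + β₂ * r i) ^ q := by
        rw [hgeo i]
        exact aux_concave q hq0 hq1 (p i) (r i) β₁ β₂ (hp_pos i).le (hr_pos i).le
          hβ₁ hβ₂ hlt.le
      have hm : 0 ≤ β₁ * p i + β₂ * r i := by
        have := hp_pos i; have := hr_pos i; positivity
      exact (Real.rpow_le_rpow_iff (hs_pos i).le hm hq0).mp h1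
    have : (1:ℝ) ≤ β₁ + β₂ := by
      calc (1:ℝ) = ∑ i, s i := hs_sum.symm
        _ ≤ ∑ i, (β₁ * p i + β₂ * r i) := Finset.sum_le_sum fun i _ => hle i
        _ = β₁ * (∑ i, p i) + β₂ * (∑ i, r i) := by
            rw [Finset.sum_add_distrib, ← Finset.mul_sum, ← Finset.mul_sum]
        _ = β₁ + β₂ := by rw [hp_sum, hr_sum]; ring
    linarith
  calc Abar = 1 * Abar := (one_mul _).symm
    _ ≤ (β₁ + β₂) * Abar := mul_le_mul_of_nonneg_right hsum1 hAbar
    _ = β₁ * Abar + β₂ * Abar := by ring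
    _ ≤ β₁ * (∑ i, p i ^ q * A i) + β₂ * (∑ i, r i ^ q * A i) := by
        gcongr
    _ = ∑ i, (β₁ * p i ^ q + β₂ * r i ^ q) * A i := by
        rw [Finset.mul_sum, Finset.mul_sum, ← Finset.sum_add_distrib]
        congr 1; ext i; ring
    _ = ∑ i, s i ^ q * A i := by
        congr 1; ext i; rw [hgeo i]
end

section
/- The q-expectation level set is a D^{(α)}-sphere: let 0 < q < 1 and A_1,…,A_{n+1} > 0, and set ε = Σ_i ((1−q)A_i)^{1/(1−q)}, r_i = ((1−q)A_i)^{1/(1−q)}/ε for each i, and d = (1/q)(1/(1−q) − ε^{q−1} Ā). Then r ∈ 𝒮ⁿ, and for every p ∈ 𝒮ⁿ one has Σ_i p_i^q A_i = Ā if and only if D^{(α)}(p,r) = d, where α = 1 − 2q. -/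
/-- The q-expectation level set `{p : ∑ i, p i ^ q * A i = Ā}` is a `D^{(α)}`-sphere
(with `α = 1 - 2q`) centered at `r_i = ((1-q)A_i)^{1/(1-q)}/ε` of radius
`d = (1/q)(1/(1-q) - ε^{q-1} Ā)`, where `ε = ∑ i, ((1-q)A_i)^{1/(1-q)}`. -/
theorem q_expectation_level_set_is_sphere (n : ℕ) (q α : ℝ) (hq0 : 0 < q) (hq1 : q < 1)
    (hα : α = 1 - 2 * q)
    (A : Fin (n + 1) → ℝ) (hA : ∀ i, 0 < A i) (Abar : ℝ)
    (ε : ℝ) (hε : ε = ∑ i, ((1 - q) * A i) ^ (1 / (1 - q)))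
    (r : Fin (n + 1) → ℝ) (hr : ∀ i, r i = ((1 - q) * A i) ^ (1 / (1 - q)) / ε)
    (d : ℝ) (hd : d = (1 / q) * (1 / (1 - q) - ε ^ (q - 1) * Abar)) :
    ((∀ i, 0 < r i) ∧ ∑ i, r i = 1)
    ∧ ∀ p : Fin (n + 1) → ℝ, (∀ i, 0 < p i) → (∑ i, p i = 1) →
        ((∑ i, p i ^ q * A i = Abar) ↔ alphaDiv q p r = d) := by
  have h1q : (0:ℝ) < 1 - q := by linarith
  have hxpos : ∀ i : Fin (n+1), 0 < ((1 - q) * A i) ^ (1 / (1 - q)) := fun i =>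
    Real.rpow_pos_of_pos (by have := hA i; positivity) _
  have hεpos : 0 < ε := by
    rw [hε]; exact Finset.sum_pos (fun i _ => hxpos i) Finset.univ_nonempty
  have hrpos : ∀ i, 0 < r i := fun i => by rw [hr]; exact div_pos (hxpos i) hεpos
  have hrsum : ∑ i, r i = 1 := by
    simp only [hr]
    rw [← Finset.sum_div, ← hε, div_self hεpos.ne']
  refine ⟨⟨hrpos, hrsum⟩, fun p hp hps => ?_⟩
  have hx1q : ∀ i : Fin (n+1), (((1 - q) * A i) ^ (1 / (1 - q))) ^ (1 - q)
      = (1 - q) * A i := fun i => by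
    rw [← Real.rpow_mul (by have := hA i; positivity), one_div,
      inv_mul_cancel₀ h1q.ne', Real.rpow_one]
  have hεq : ε ^ (q - 1) = (ε ^ (1 - q))⁻¹ := by
    rw [← Real.rpow_neg hεpos.le]; ring_nf
  have hε1qpos : 0 < ε ^ (1 - q) := Real.rpow_pos_of_pos hεpos _
  have hsum : ∑ i, p i ^ q * r i ^ (1 - q)
      = (1 - q) * ε ^ (q - 1) * ∑ i, p i ^ q * A i := by
    rw [Finset.mul_sum]
    refine Finset.sum_congr rfl fun i _ => ?_
    rw [hr i, Real.div_rpow (hxpos i).le hεpos.le, hx1q i, hεq]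
    field_simp
  have hd' : d = (1 / (q * (1 - q))) * (1 - (1 - q) * ε ^ (q - 1) * Abar) := by
    rw [hd]; field_simp
  unfold alphaDiv
  rw [hsum, hd']
  have hεq1pos : 0 < ε ^ (q - 1) := Real.rpow_pos_of_pos hεpos _
  constructor
  · intro h; rw [h]
  · intro h
    have h1 : 1 - (1 - q) * ε ^ (q - 1) * ∑ i, p i ^ q * A i
        = 1 - (1 - q) * ε ^ (q - 1) * Abar :=
      mul_left_cancel₀ (by positivity) h
    have h2 : (1 - q) * ε ^ (q - 1) * ∑ i, p i ^ q * A i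
        = (1 - q) * ε ^ (q - 1) * Abar := by linarith
    exact mul_left_cancel₀ (by positivity) h2
end

section
/- The trajectory of the Fisher-gradient flow of the α-divergence is a ∇^{(−α)}-geodesic: let 0 < q < 1, fix r ∈ 𝒮ⁿ, and let p : [0,T) → 𝒮ⁿ be a differentiable curve with p(0) = p₀ solving, for every i = 1,…,n+1, the ODE dp_i/dt = (1/(1−q)) ( p_i(t)^q r_i^{1−q} − p_i(t) Σ_j p_j(t)^q r_j^{1−q} ), which is the gradient flow of p ↦ D^{(α)}(p,r) on 𝒮ⁿ with respect to the Fisher metric (α = 1 − 2q). Then for every t ∈ [0,T) there exist a(t), b(t) ≥ 0 such that p_i(t)^{1−q} = a(t) (p₀)_i^{1−q} + b(t) r_i^{1−q} for all i; i.e. the trajectory lies on the ∇^{(−α)}-geodesic curve connecting p₀ and r. -/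
open Set

/-- The trajectory of the Fisher-gradient flow of the α-divergence `p ↦ D^{(α)}(p,r)`
(`α = 1 - 2q`, `0 < q < 1`) lies on the `∇^{(-α)}`-geodesic connecting the initial point
`p₀` and the target `r`: for every `t` there are `a(t), b(t) ≥ 0` with
`p_i(t)^{1-q} = a(t) (p₀)_i^{1-q} + b(t) r_i^{1-q}` for all `i`. -/
theorem gradient_flow_is_dual_geodesic (n : ℕ) (q : ℝ) (hq0 : 0 < q) (hq1 : q < 1)
    (r : Fin (n + 1) → ℝ) (hr_pos : ∀ i, 0 < r i) (hr_sum : ∑ i, r i = 1)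
    (T : ℝ) (hT : 0 < T)
    (p : ℝ → Fin (n + 1) → ℝ) (p₀ : Fin (n + 1) → ℝ) (hp0 : p 0 = p₀)
    (hmem : ∀ t ∈ Ico (0:ℝ) T, (∀ i, 0 < p t i) ∧ ∑ i, p t i = 1)
    (hode : ∀ t ∈ Ico (0:ℝ) T, ∀ i,
      HasDerivWithinAt (fun s => p s i)
        ((1 / (1 - q)) * (p t i ^ q * r i ^ (1 - q)
          - p t i * ∑ j, p t j ^ q * r j ^ (1 - q)))
        (Ico 0 T) t) :
    ∀ t ∈ Ico (0:ℝ) T, ∃ a b : ℝ, 0 ≤ a ∧ 0 ≤ b ∧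
      ∀ i, p t i ^ (1 - q) = a * p₀ i ^ (1 - q) + b * r i ^ (1 - q) := by
  have h0T : (0:ℝ) ∈ Ico (0:ℝ) T := ⟨le_refl 0, hT⟩
  have hq1' : (0:ℝ) < 1 - q := by linarith
  set ρ : Fin (n + 1) → ℝ := fun i => r i ^ (1 - q) with hρdef
  have hρpos : ∀ i, 0 < ρ i := fun i => Real.rpow_pos_of_pos (hr_pos i) _
  set C : ℝ → ℝ := fun s => ∑ j, p s j ^ q * r j ^ (1 - q) with hCdef
  -- continuity of coordinates and of C
  have hpc : ∀ i, ContinuousOn (fun s => p s i) (Ico (0:ℝ) T) :=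
    fun i s hs => (hode s hs i).continuousWithinAt
  have hCc : ContinuousOn C (Ico (0:ℝ) T) := by
    apply continuousOn_finset_sum
    intro j _
    exact ((hpc j).rpow_const (fun x _ => Or.inr hq0.le)).mul continuousOn_const
  set I : ℝ → ℝ := fun s => ∫ u in (0:ℝ)..s, C u with hIdef
  have hmeasIco : MeasurableSet (Ico (0:ℝ) T) := measurableSet_Ico
  have hInt : ∀ s ∈ Ico (0:ℝ) T, IntervalIntegrable C MeasureTheory.volume 0 s := by
    intro s hs
    apply ContinuousOn.intervalIntegrable
    rw [uIcc_of_le hs.1]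
    exact hCc.mono fun x hx => ⟨hx.1, lt_of_le_of_lt hx.2 hs.2⟩
  have hIderiv : ∀ s ∈ Ico (0:ℝ) T, HasDerivWithinAt I (C s) (Ico 0 T) s := by
    intro s hs
    rcases eq_or_lt_of_le hs.1 with h0 | h0
    · -- s = 0
      have hmemf : Ico (0:ℝ) T ∈ nhdsWithin (0:ℝ) (Ioi (0:ℝ)) := by
        refine Filter.mem_of_superset
          (inter_mem_nhdsWithin (Ioi (0:ℝ)) (Iio_mem_nhds hT)) ?_
        intro x hx; exact ⟨hx.1.le, hx.2⟩
      have h1 : StronglyMeasurableAtFilter C (nhdsWithin (0:ℝ) (Ioi (0:ℝ))) :=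
        ⟨Ico 0 T, hmemf, hCc.aestronglyMeasurable hmeasIco⟩
      have h2 : ContinuousWithinAt C (Ioi (0:ℝ)) 0 :=
        (hCc 0 h0T).mono_of_mem_nhdsWithin hmemf
      have h3 := (intervalIntegral.integral_hasDerivWithinAt_right (hInt 0 h0T)
        (s := Ici (0:ℝ)) (t := Ioi (0:ℝ)) h1 h2).mono
        (fun x (hx : x ∈ Ico (0:ℝ) T) => hx.1)
      rw [← h0]
      exact h3
    · -- 0 < s
      have hnb : Ico (0:ℝ) T ∈ nhds s :=
        Filter.mem_of_superset (Ioo_mem_nhds h0 hs.2) Ioo_subset_Ico_self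
      have h1 : StronglyMeasurableAtFilter C (nhds s) :=
        ⟨Ico 0 T, hnb, hCc.aestronglyMeasurable hmeasIco⟩
      have h2 : ContinuousAt C s := (hCc s hs).continuousAt hnb
      exact (intervalIntegral.integral_hasDerivAt_right (hInt s hs) h1 h2).hasDerivWithinAt
  set E : ℝ → ℝ := fun s => Real.exp (I s) with hEdef
  have hEpos : ∀ s, 0 < E s := fun s => Real.exp_pos _
  have hEd : ∀ s ∈ Ico (0:ℝ) T, HasDerivWithinAt E (C s * E s) (Ico 0 T) s := by
    intro s hs
    have h := (hIderiv s hs).exp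
    rw [mul_comm] at h
    exact h
  set g : Fin (n + 1) → ℝ → ℝ := fun i s => p s i ^ (1 - q) * E s with hgdef
  have hgd : ∀ s ∈ Ico (0:ℝ) T, ∀ i, HasDerivWithinAt (g i) (ρ i * E s) (Ico 0 T) s := by
    intro s hs i
    have hppos := (hmem s hs).1 i
    have hud : HasDerivWithinAt (fun u => p u i ^ (1 - q))
        (ρ i - p s i ^ (1 - q) * C s) (Ico 0 T) s := by
      have h := (hode s hs i).rpow_const (p := 1 - q) (Or.inl (ne_of_gt hppos))
      convert h using 1
      have e1 : (1 : ℝ) - q - 1 = -q := by ring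
      rw [e1]
      have e2 : p s i ^ q * p s i ^ (-q) = 1 := by
        rw [← Real.rpow_add hppos]; simp
      have e3 : p s i * p s i ^ (-q) = p s i ^ (1 - q) := by
        nth_rewrite 1 [← Real.rpow_one (p s i)]
        rw [← Real.rpow_add hppos]; ring_nf
      simp only [hρdef, hCdef]
      field_simp
      linear_combination (-(r i ^ ((1:ℝ) - q))) * e2
        + (∑ j, p s j ^ q * r j ^ ((1:ℝ) - q)) * e3
    have h := hud.mul (hEd s hs)
    exact h.congr_deriv (by ring)
  have hI0 : I 0 = 0 := intervalIntegral.integral_same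
  have hE0 : E 0 = 1 := by rw [hEdef]; simp [hI0]
  have hg0 : ∀ i, g i 0 = p₀ i ^ (1 - q) := by
    intro i; simp only [hgdef]; rw [hE0, hp0, mul_one]
  have hconv : Convex ℝ (Ico (0:ℝ) T) := convex_Ico 0 T
  have hUD : UniqueDiffOn ℝ (Ico (0:ℝ) T) := uniqueDiffOn_Ico 0 T
  intro t ht
  -- key conservation law
  have hBc : ∀ i, ρ 0 * g i t - ρ i * g 0 t = ρ 0 * g i 0 - ρ i * g 0 0 := by
    intro i
    set φ : ℝ → ℝ := fun s => ρ 0 * g i s - ρ i * g 0 s with hφdef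
    have hφd : ∀ s ∈ Ico (0:ℝ) T, HasDerivWithinAt φ 0 (Ico 0 T) s := by
      intro s hs
      have h := (HasDerivWithinAt.const_mul (ρ 0) (hgd s hs i)).sub
        (HasDerivWithinAt.const_mul (ρ i) (hgd s hs 0))
      have e : ρ 0 * (ρ i * E s) - ρ i * (ρ 0 * E s) = 0 := by ring
      rwa [e] at h
    have hdiffOn : DifferentiableOn ℝ φ (Ico (0:ℝ) T) :=
      fun s hs => (hφd s hs).differentiableWithinAt
    have hfzero : ∀ s ∈ Ico (0:ℝ) T, fderivWithin ℝ φ (Ico (0:ℝ) T) s = 0 := by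
      intro s hs
      have h : HasFDerivWithinAt φ ((1 : ℝ →L[ℝ] ℝ).smulRight 0) (Ico (0:ℝ) T) s :=
        (hφd s hs).hasFDerivWithinAt
      have h2 : ((1 : ℝ →L[ℝ] ℝ).smulRight (0:ℝ)) = 0 := by
        ext x; simp
      rw [h2] at h
      exact h.fderivWithin (hUD s hs)
    have h := hconv.is_const_of_fderivWithin_eq_zero hdiffOn hfzero ht h0T
    simpa only [hφdef] using h
  -- monotonicity of g 0
  have hgmono : g 0 0 ≤ g 0 t := by
    have hmono : MonotoneOn (g 0) (Ico (0:ℝ) T) := by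
      apply monotoneOn_of_deriv_nonneg hconv
      · exact fun s hs => (hgd s hs 0).continuousWithinAt
      · intro s hs
        rw [interior_Ico] at hs
        have hnb : Ico (0:ℝ) T ∈ nhds s :=
          Filter.mem_of_superset (Ioo_mem_nhds hs.1 hs.2) Ioo_subset_Ico_self
        exact (((hgd s ⟨hs.1.le, hs.2⟩ 0).hasDerivAt hnb).differentiableAt).differentiableWithinAt
      · intro s hs
        rw [interior_Ico] at hs
        have hnb : Ico (0:ℝ) T ∈ nhds s :=
          Filter.mem_of_superset (Ioo_mem_nhds hs.1 hs.2) Ioo_subset_Ico_self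
        have hd := (hgd s ⟨hs.1.le, hs.2⟩ 0).hasDerivAt hnb
        rw [hd.deriv]
        exact mul_nonneg (hρpos 0).le (hEpos s).le
    exact hmono h0T ht ht.1
  -- assemble
  set B : ℝ := (g 0 t - g 0 0) / ρ 0 with hBdef
  have hB : 0 ≤ B := div_nonneg (by linarith) (hρpos 0).le
  refine ⟨(E t)⁻¹, B * (E t)⁻¹, inv_nonneg.2 (hEpos t).le,
    mul_nonneg hB (inv_nonneg.2 (hEpos t).le), ?_⟩
  intro i
  have hgi : g i t = g i 0 + B * ρ i := by
    have h := hBc i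
    rw [hBdef]
    have hρ0 := (hρpos 0).ne'
    field_simp
    linear_combination h
  have hpt : p t i ^ (1 - q) = g i t / E t := by
    rw [eq_div_iff (hEpos t).ne']
  rw [hpt, hgi, hg0 i]
  simp only [hρdef]
  field_simp
end

section
/- Constants of motion of the gradient flow: let 0 < q < 1, fix r ∈ 𝒮ⁿ, and let p : [0,T) → 𝒮ⁿ be a differentiable curve with p(0) = p₀ solving dp_i/dt = (1/(1−q)) ( p_i(t)^q r_i^{1−q} − p_i(t) Σ_j p_j(t)^q r_j^{1−q} ) for all i. Then for every vector θ = (θ^1,…,θ^{n+1}) ∈ ℝ^{n+1} satisfying Σ_i θ^i (p₀)_i^{1−q} = 0 and Σ_i θ^i r_i^{1−q} = 0, the quantity C(t) = Σ_i θ^i p_i(t)^{1−q}/(1−q) is constant in t (equal to 0 for all t ∈ [0,T)). -/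
open Set

/-- Constants of motion of the Fisher-gradient flow of the α-divergence: for any vector
`θ` with `∑ i, θ i * (p₀ i)^{1-q} = 0` and `∑ i, θ i * (r i)^{1-q} = 0`, the quantity
`C(t) = ∑ i, θ i * (p t i)^{1-q} / (1 - q)` is constant (equal to `0`) along the flow. -/
theorem gradient_flow_constants_of_motion (n : ℕ) (q : ℝ) (hq0 : 0 < q) (hq1 : q < 1)
    (r : Fin (n + 1) → ℝ) (hr_pos : ∀ i, 0 < r i) (hr_sum : ∑ i, r i = 1)
    (T : ℝ) (hT : 0 < T)
    (p : ℝ → Fin (n + 1) → ℝ) (p₀ : Fin (n + 1) → ℝ) (hp0 : p 0 = p₀)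
    (hmem : ∀ t ∈ Ico (0:ℝ) T, (∀ i, 0 < p t i) ∧ ∑ i, p t i = 1)
    (hode : ∀ t ∈ Ico (0:ℝ) T, ∀ i,
      HasDerivWithinAt (fun s => p s i)
        ((1 / (1 - q)) * (p t i ^ q * r i ^ (1 - q)
          - p t i * ∑ j, p t j ^ q * r j ^ (1 - q)))
        (Ico 0 T) t)
    (θ : Fin (n + 1) → ℝ)
    (hθ0 : ∑ i, θ i * p₀ i ^ (1 - q) = 0)
    (hθr : ∑ i, θ i * r i ^ (1 - q) = 0) :
    ∀ t ∈ Ico (0:ℝ) T, ∑ i, θ i * p t i ^ (1 - q) / (1 - q) = 0 := by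
  have hq1' : (0:ℝ) < 1 - q := by linarith
  have hne : (1:ℝ) - q ≠ 0 := hq1'.ne'
  set g : ℝ → ℝ := fun s => ∑ i, θ i * p s i ^ (1 - q) with hg
  set S : ℝ → ℝ := fun s => ∑ j, p s j ^ q * r j ^ (1 - q) with hS
  have hgd : ∀ s ∈ Ico (0:ℝ) T, HasDerivWithinAt g (-(S s) * g s) (Ico 0 T) s := by
    intro s hs
    have hpos := (hmem s hs).1
    have hd : HasDerivWithinAt g
        (∑ i, θ i * ((1 / (1 - q)) * (p s i ^ q * r i ^ (1 - q)
          - p s i * S s) * (1 - q) * p s i ^ (1 - q - 1))) (Ico 0 T) s := by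
      apply HasDerivWithinAt.fun_sum
      intro i _
      exact ((hode s hs i).rpow_const (Or.inl (hpos i).ne')).const_mul (θ i)
    have key : ∀ i, (1 / (1 - q)) * (p s i ^ q * r i ^ (1 - q)
          - p s i * S s) * (1 - q) * p s i ^ (1 - q - 1)
        = r i ^ (1 - q) - p s i ^ (1 - q) * S s := by
      intro i
      have h0 := hpos i
      have e1 : p s i ^ q * p s i ^ (1 - q - 1) = 1 := by
        rw [← Real.rpow_add h0, show q + (1 - q - 1) = 0 by ring, Real.rpow_zero]
      have e2 : p s i * p s i ^ (1 - q - 1) = p s i ^ (1 - q) := by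
        nth_rewrite 1 [← Real.rpow_one (p s i)]
        rw [← Real.rpow_add h0, show (1:ℝ) + (1 - q - 1) = 1 - q by ring]
      have hcancel : (1 / (1 - q)) * (p s i ^ q * r i ^ (1 - q) - p s i * S s) * (1 - q)
          = p s i ^ q * r i ^ (1 - q) - p s i * S s := by field_simp
      rw [hcancel]
      linear_combination r i ^ (1 - q) * e1 - S s * e2
    have e : (∑ i, θ i * ((1 / (1 - q)) * (p s i ^ q * r i ^ (1 - q)
          - p s i * S s) * (1 - q) * p s i ^ (1 - q - 1))) = -(S s) * g s := by
      rw [Finset.sum_congr rfl fun i _ => by rw [key i]]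
      have : ∑ i, θ i * (r i ^ (1 - q) - p s i ^ (1 - q) * S s)
          = (∑ i, θ i * r i ^ (1 - q)) - S s * ∑ i, θ i * p s i ^ (1 - q) := by
        rw [Finset.mul_sum, ← Finset.sum_sub_distrib]
        exact Finset.sum_congr rfl fun i _ => by ring
      rw [this, hθr, hg]
      ring
    exact e ▸ hd
  have hSbnd : ∀ s ∈ Ico (0:ℝ) T, |S s| ≤ (n + 1 : ℝ) := by
    intro s hs
    have hpos := (hmem s hs).1
    have hsum := (hmem s hs).2
    have hS0 : 0 ≤ S s :=
      Finset.sum_nonneg fun j _ => mul_nonneg (Real.rpow_nonneg (hpos j).le _)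
        (Real.rpow_nonneg (hr_pos j).le _)
    rw [abs_of_nonneg hS0]
    have : S s ≤ ∑ _j : Fin (n+1), (1:ℝ) := by
      apply Finset.sum_le_sum
      intro j _
      have hp1 : p s j ≤ 1 := by
        rw [← hsum]
        exact Finset.single_le_sum (fun k _ => (hpos k).le) (Finset.mem_univ j)
      have hr1 : r j ≤ 1 := by
        rw [← hr_sum]
        exact Finset.single_le_sum (fun k _ => (hr_pos k).le) (Finset.mem_univ j)
      exact mul_le_one₀ (Real.rpow_le_one (hpos j).le hp1 hq0.le)
        (Real.rpow_nonneg (hr_pos j).le _) (Real.rpow_le_one (hr_pos j).le hr1 hq1'.le)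
    simpa using this
  have hg0 : g 0 = 0 := by simp [hg, hp0, hθ0]
  have hgz : ∀ t ∈ Ico (0:ℝ) T, g t = 0 := by
    intro t ht
    obtain ⟨ht0, htT⟩ := ht
    have hsub : Icc (0:ℝ) t ⊆ Ico 0 T := fun x hx => ⟨hx.1, lt_of_le_of_lt hx.2 htT⟩
    have hcont : ContinuousOn g (Icc 0 t) := fun x hx =>
      ((hgd x (hsub hx)).continuousWithinAt).mono hsub
    have hder : ∀ x ∈ Ico (0:ℝ) t, HasDerivWithinAt g (-(S x) * g x) (Ici x) x := by
      intro x hx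
      have hxT : x ∈ Ico (0:ℝ) T := ⟨hx.1, lt_of_lt_of_le hx.2 htT.le⟩
      refine (hgd x hxT).mono_of_mem_nhdsWithin ?_
      have h1 : Iio T ∩ Ici x ∈ nhdsWithin x (Ici x) :=
        Filter.inter_mem (mem_nhdsWithin_of_mem_nhds (Iio_mem_nhds hxT.2)) self_mem_nhdsWithin
      exact Filter.mem_of_superset h1 (fun y hy => ⟨le_trans hxT.1 hy.2, hy.1⟩)
    have hb := norm_le_gronwallBound_of_norm_deriv_right_le (δ := 0) (K := (n+1:ℝ)) (ε := 0)
      hcont hder (by simp [hg0]) (fun x hx => by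
        have hxT : x ∈ Ico (0:ℝ) T := ⟨hx.1, lt_of_lt_of_le hx.2 htT.le⟩
        rw [Real.norm_eq_abs, Real.norm_eq_abs, abs_mul, abs_neg, add_zero]
        exact mul_le_mul_of_nonneg_right (hSbnd x hxT) (abs_nonneg _))
      t ⟨ht0, le_refl t⟩
    rw [gronwallBound_ε0_δ0] at hb
    have h2 : |g t| ≤ 0 := by simpa using hb
    exact abs_eq_zero.mp (le_antisymm h2 (abs_nonneg _))
  intro t ht
  rw [← Finset.sum_div]
  have := hgz t ht
  simp only [hg] at this
  rw [this]
  simp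
end

section
/- Divergence to a moment-matching q-Gaussian equals the entropy gap (maximum entropy property): let 1 < m < 2researchers, q = 2 − m ∈ (0,1). Let r : ℝⁿ → ℝ be a q-Gaussian probability density, r(x) = (c + (1−q)(θᵀx + xᵀΘx))^{1/(1−q)} on P = { x : c + (1−q)(θᵀx + xᵀΘx) > 0 } and r = 0 off P, with Θ symmetric negative definite and ∫ r = 1. Let p be a probability density on ℝⁿ with p = 0 almost everywhere off P, with finite first and second moments equal to those of r (∫ x p dx = ∫ x r dx and ∫ x xᵀ p dx = ∫ x xᵀ r dx), and with ∫ p^m dx < ∞. Then 𝔇[p‖r] = ( ∫ p^m dx − ∫ r^m dx ) / ( m(m−1) ) = ℑ[r] − ℑ[p], and consequently 𝔇[p‖r] ≥ 0 and ℑ[r] ≥ ℑ[p], with equality if and only if p = r almost everywhere; i.e. the q-Gaussian maximizes the generalized entropy ℑ among all densities with the same first and second moments. -/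
open MeasureTheory Matrix

/-- The Bregman divergence
`𝔇[p‖r] = ∫ ((r^{2-q} - p^{2-q})/(2-q) - p (r^{1-q} - p^{1-q})/(1-q)) dx`. -/
noncomputable def BregmanDiv (n : ℕ) (q : ℝ) (p r : (Fin n → ℝ) → ℝ) : ℝ :=
  ∫ x, ((r x ^ (2 - q) - p x ^ (2 - q)) / (2 - q)
        - p x * (r x ^ (1 - q) - p x ^ (1 - q)) / (1 - q))

/-- The generalized entropy `ℑ[p] = ∫ (p^{2-q} - p)/((q-1)(2-q)) dx`. -/
noncomputable def genEntropy (n : ℕ) (q : ℝ) (p : (Fin n → ℝ) → ℝ) : ℝ :=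
  ∫ x, (p x ^ (2 - q) - p x) / ((q - 1) * (2 - q))

private lemma bregman_pt_lt {m a b : ℝ} (hm : 1 < m) (ha : 0 ≤ a) (hb : 0 ≤ b) (hab : a ≠ b) :
    m * (b ^ (m - 1) * (a - b)) < a ^ m - b ^ m := by
  rcases hb.eq_or_lt with hb0 | hb0
  · have ha' : 0 < a := lt_of_le_of_ne ha (fun h => hab (h ▸ hb0.symm ▸ rfl))
    rw [← hb0]
    rw [Real.zero_rpow (by intro h; linarith [sub_eq_zero.mp h] : m - 1 ≠ 0),
        Real.zero_rpow (by positivity : m ≠ 0)]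
    simpa using Real.rpow_pos_of_pos ha' m
  · have hbne : b ≠ 0 := hb0.ne'
    set s : ℝ := a / b - 1 with hs_def
    have hs : -1 ≤ s := by
      have : 0 ≤ a / b := div_nonneg ha hb
      simp only [hs_def]; linarith
    have hs' : s ≠ 0 := by
      simp only [hs_def, sub_ne_zero]
      intro h
      exact hab (by field_simp at h; linarith)
    have key := one_add_mul_self_lt_rpow_one_add hs hs' hm
    have h1 : 1 + s = a / b := by simp [hs_def]
    rw [h1] at key
    have hbm : (0:ℝ) < b ^ m := Real.rpow_pos_of_pos hb0 m
    have h2 : (a / b) ^ m = a ^ m / b ^ m := Real.div_rpow ha hb m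
    have key2 : (1 + m * s) * b ^ m < a ^ m := by
      have h3 := mul_lt_mul_of_pos_right key hbm
      rwa [h2, div_mul_cancel₀ _ hbm.ne'] at h3
    have h4 : b ^ (m - 1) * b = b ^ m := by
      rw [← Real.rpow_add_one hbne (m - 1)]
      ring_nf
    have h5 : (1 + m * s) * b ^ m = b ^ m + m * (b ^ (m - 1) * (a - b)) := by
      rw [← h4]
      simp only [hs_def]
      field_simp
    linarith

private lemma bregman_pt_le {m a b : ℝ} (hm : 1 < m) (ha : 0 ≤ a) (hb : 0 ≤ b) :
    m * (b ^ (m - 1) * (a - b)) ≤ a ^ m - b ^ m := by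
  rcases eq_or_ne a b with rfl | hab
  · simp
  · exact (bregman_pt_lt hm ha hb hab).le

private lemma coercive {n : ℕ} (M : Matrix (Fin n) (Fin n) ℝ) (hM : M.PosDef) :
    ∃ ε > 0, ∀ x : Fin n → ℝ, ε * ‖x‖ ^ 2 ≤ x ⬝ᵥ M.mulVec x := by
  have hpos : ∀ x : Fin n → ℝ, x ≠ 0 → 0 < x ⬝ᵥ M.mulVec x := by
    intro x hx
    simpa [star_trivial] using hM.dotProduct_mulVec_pos hx
  by_cases hn : n = 0
  · refine ⟨1, one_pos, fun x => ?_⟩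
    have hx : x = 0 := funext fun i => absurd i.isLt (by omega)
    simp [hx]
  · have hf : Continuous fun y : Fin n → ℝ => y ⬝ᵥ M.mulVec y := by
      simp only [dotProduct, Matrix.mulVec]
      exact continuous_finset_sum _ fun i _ =>
        (continuous_apply i).mul (continuous_finset_sum _ fun j _ =>
          (continuous_const.mul (continuous_apply j)))
    haveI : Nonempty (Fin n) := ⟨⟨0, Nat.pos_of_ne_zero hn⟩⟩
    have hsne : (Metric.sphere (0 : Fin n → ℝ) 1).Nonempty :=
      NormedSpace.sphere_nonempty.mpr zero_le_one
    obtain ⟨y₀, hy₀, hmin⟩ := (isCompact_sphere (0 : Fin n → ℝ) 1).exists_isMinOn hsne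
      hf.continuousOn
    have hy₀ne : y₀ ≠ 0 := by
      intro h
      have := mem_sphere_zero_iff_norm.mp hy₀
      rw [h] at this; simp at this
    refine ⟨y₀ ⬝ᵥ M.mulVec y₀, hpos y₀ hy₀ne, fun x => ?_⟩
    rcases eq_or_ne x 0 with rfl | hx
    · simp
    · have hnx : (0:ℝ) < ‖x‖ := norm_pos_iff.mpr hx
      set y : Fin n → ℝ := ‖x‖⁻¹ • x with hy_def
      have hy : y ∈ Metric.sphere (0 : Fin n → ℝ) 1 := by
        rw [mem_sphere_zero_iff_norm, hy_def, norm_smul, norm_inv, norm_norm,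
          inv_mul_cancel₀ hnx.ne']
      have hle := hmin hy
      have hxy : x = ‖x‖ • y := by
        rw [hy_def, smul_smul, mul_inv_cancel₀ hnx.ne', one_smul]
      have hgen : ∀ (t : ℝ) (z : Fin n → ℝ),
          (t • z) ⬝ᵥ M.mulVec (t • z) = t ^ 2 * (z ⬝ᵥ M.mulVec z) := by
        intro t z
        simp [Matrix.mulVec_smul, smul_dotProduct, dotProduct_smul, smul_eq_mul]
        ring
      have hscale : x ⬝ᵥ M.mulVec x = ‖x‖ ^ 2 * (y ⬝ᵥ M.mulVec y) := by
        conv_lhs => rw [hxy]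
        exact hgen _ _
      rw [hscale, mul_comm]
      have h2 : (0:ℝ) < ‖x‖ ^ 2 := by positivity
      exact mul_le_mul_of_nonneg_left hle h2.le


set_option maxHeartbeats 1000000 in
/-- Divergence to a moment-matching q-Gaussian equals the entropy gap (maximum entropy
property of the q-Gaussian): `𝔇[p‖r] = (∫p^m - ∫r^m)/(m(m-1)) = ℑ[r] - ℑ[p] ≥ 0`, with
equality iff `p = r` a.e. -/
theorem divergence_to_qGaussian_eq_entropy_gap (n : ℕ) (m q : ℝ)
    (hm1 : 1 < m) (hm2 : m < 2) (hq : q = 2 - m)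
    (c : ℝ) (θ : Fin n → ℝ) (Θ : Matrix (Fin n) (Fin n) ℝ)
    (hΘsymm : Θ.IsSymm) (hΘneg : (-Θ).PosDef)
    (r : (Fin n → ℝ) → ℝ)
    (hr : ∀ x, r x = max 0 (c + (1 - q) * (θ ⬝ᵥ x + x ⬝ᵥ Θ.mulVec x)) ^ (1 / (1 - q)))
    (hr_int : Integrable r) (hr_mass : ∫ x, r x = 1)
    (hrm_int : Integrable (fun x => r x ^ m))
    (p : (Fin n → ℝ) → ℝ)
    (hp_nonneg : ∀ x, 0 ≤ p x) (hp_int : Integrable p) (hp_mass : ∫ x, p x = 1)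
    (hp_supp : ∀ᵐ x ∂volume, c + (1 - q) * (θ ⬝ᵥ x + x ⬝ᵥ Θ.mulVec x) ≤ 0 → p x = 0)
    (hpm_int : Integrable (fun x => p x ^ m))
    (hp_mom1_int : ∀ i, Integrable (fun x => x i * p x))
    (hp_mom2_int : ∀ i j, Integrable (fun x => x i * x j * p x))
    (hmom1 : ∀ i, (∫ x, x i * p x) = ∫ x, x i * r x)
    (hmom2 : ∀ i j, (∫ x, x i * x j * p x) = ∫ x, x i * x j * r x) :
    BregmanDiv n q p r = ((∫ x, p x ^ m) - ∫ x, r x ^ m) / (m * (m - 1))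
    ∧ BregmanDiv n q p r = genEntropy n q r - genEntropy n q p
    ∧ 0 ≤ BregmanDiv n q p r
    ∧ genEntropy n q p ≤ genEntropy n q r
    ∧ (BregmanDiv n q p r = 0 ↔ p =ᵐ[volume] r) := by
  subst hq
  have e2 : (2:ℝ) - (2 - m) = m := by ring
  have e1 : (1:ℝ) - (2 - m) = m - 1 := by ring
  have e0 : (2:ℝ) - m - 1 = 1 - m := by ring
  simp only [e1] at hr hp_supp
  have hm0 : (0:ℝ) < m := by linarith
  have hmne : m ≠ 0 := hm0.ne'
  have hm1pos : (0:ℝ) < m - 1 := by linarith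
  have hm1ne : m - 1 ≠ 0 := hm1pos.ne'
  set A : (Fin n → ℝ) → ℝ := fun x => c + (m - 1) * (θ ⬝ᵥ x + x ⬝ᵥ Θ.mulVec x) with hA_def
  -- basic pointwise facts
  have hr_nonneg : ∀ x, 0 ≤ r x := fun x => by
    rw [hr x]; exact Real.rpow_nonneg (le_max_left 0 _) _
  have hr_pow : ∀ x, r x ^ (m - 1) = max 0 (A x) := by
    intro x
    rw [hr x, ← Real.rpow_mul (le_max_left 0 _), one_div, inv_mul_cancel₀ hm1ne, Real.rpow_one]
  have hr_zero : ∀ x, A x ≤ 0 → r x = 0 := by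
    intro x hx
    rw [hr x, max_eq_left hx, Real.zero_rpow (by positivity : 1 / (m - 1) ≠ 0)]
  have hmul : ∀ t : ℝ, 0 ≤ t → t * t ^ (m - 1) = t ^ m := by
    intro t ht
    rcases ht.eq_or_lt with h | h
    · rw [← h]; simp [Real.zero_rpow hmne]
    · nth_rewrite 1 [← Real.rpow_one t]
      rw [← Real.rpow_add h, show (1:ℝ) + (m - 1) = m from by ring]
  have hrA : ∀ x, r x * A x = r x ^ m := by
    intro x
    rcases le_or_gt (A x) 0 with h | h
    · rw [hr_zero x h]; simp [Real.zero_rpow hmne]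
    · have hx : r x ^ (m - 1) = A x := by rw [hr_pow x, max_eq_right h.le]
      rw [← hx, hmul _ (hr_nonneg x)]
  have hpA : (fun x => p x * r x ^ (m - 1)) =ᶠ[MeasureTheory.ae volume] (fun x => p x * A x) := by
    filter_upwards [hp_supp] with x hx
    rcases le_or_gt (A x) 0 with h | h
    · simp [hx h]
    · rw [hr_pow x, max_eq_right h.le]
  -- boundedness of the support of r
  obtain ⟨ε, hε, hcoer⟩ := coercive (-Θ) hΘneg
  set T : ℝ := ∑ i, |θ i| with hT_def
  have hT : 0 ≤ T := Finset.sum_nonneg fun i _ => abs_nonneg _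
  set R : ℝ := max 1 ((|c| + (m - 1) * T + 1) / ((m - 1) * ε)) with hR_def
  have hR1 : (1:ℝ) ≤ R := le_max_left _ _
  have hR0 : (0:ℝ) ≤ R := by linarith
  have hsupp_bound : ∀ x, 0 < A x → ‖x‖ ≤ R := by
    intro x hAx
    by_contra hgt
    push_neg at hgt
    have hθx : θ ⬝ᵥ x ≤ T * ‖x‖ := by
      rw [dotProduct, hT_def, Finset.sum_mul]
      refine Finset.sum_le_sum fun i _ => ?_
      calc θ i * x i ≤ |θ i * x i| := le_abs_self _
        _ = |θ i| * |x i| := abs_mul _ _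
        _ ≤ |θ i| * ‖x‖ := by
            have h := norm_le_pi_norm x i
            exact mul_le_mul_of_nonneg_left (by simpa using h) (abs_nonneg _)
    have hQx : x ⬝ᵥ Θ.mulVec x ≤ -(ε * ‖x‖ ^ 2) := by
      have h1 := hcoer x
      have h2 : x ⬝ᵥ (-Θ).mulVec x = -(x ⬝ᵥ Θ.mulVec x) := by
        rw [Matrix.neg_mulVec, dotProduct_neg]
      linarith
    have h1R : (1:ℝ) ≤ ‖x‖ := le_trans hR1 hgt.le
    have hprod : (0:ℝ) < (m - 1) * ε := by positivity
    have hRe : (|c| + (m - 1) * T + 1) / ((m - 1) * ε) ≤ R := le_max_right _ _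
    have hRε : |c| + (m - 1) * T + 1 ≤ (m - 1) * ε * ‖x‖ := by
      rw [div_le_iff₀ hprod] at hRe
      nlinarith
    have hAle : A x ≤ 0 := by
      have hexp : A x = c + (m - 1) * (θ ⬝ᵥ x) + (m - 1) * (x ⬝ᵥ Θ.mulVec x) := by
        simp only [hA_def]; ring
      nlinarith [mul_le_mul_of_nonneg_right hRε (norm_nonneg x), le_abs_self c,
        mul_le_mul_of_nonneg_left hθx (le_of_lt hm1pos),
        mul_le_mul_of_nonneg_left hQx (le_of_lt hm1pos),
        mul_nonneg (by positivity : (0:ℝ) ≤ |c| + 1) (by linarith : (0:ℝ) ≤ ‖x‖ - 1)]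
    linarith
  have hr_ne_bound : ∀ x, r x ≠ 0 → ‖x‖ ≤ R := by
    intro x hx
    by_contra h
    push_neg at h
    exact hx (hr_zero x (by by_contra h2; push_neg at h2; exact absurd (hsupp_bound x h2) h.not_ge))
  -- r moments integrable
  have hr_mom1_int : ∀ i, Integrable (fun x : Fin n → ℝ => x i * r x) := by
    intro i
    refine Integrable.mono' (hr_int.const_mul R)
      ((continuous_apply i).aestronglyMeasurable.mul hr_int.aestronglyMeasurable)
      (Filter.Eventually.of_forall fun x => ?_)
    rcases eq_or_ne (r x) 0 with h | h
    · simp [h, mul_nonneg hR0 (hr_nonneg x)]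
    · have hb := hr_ne_bound x h
      rw [Real.norm_eq_abs, abs_mul, abs_of_nonneg (hr_nonneg x)]
      refine mul_le_mul_of_nonneg_right ?_ (hr_nonneg x)
      exact le_trans (by simpa using norm_le_pi_norm x i) hb
  have hr_mom2_int : ∀ i j, Integrable (fun x : Fin n → ℝ => x i * x j * r x) := by
    intro i j
    refine Integrable.mono' (hr_int.const_mul (R * R))
      (((continuous_apply i).mul (continuous_apply j)).aestronglyMeasurable.mul
        hr_int.aestronglyMeasurable)
      (Filter.Eventually.of_forall fun x => ?_)
    rcases eq_or_ne (r x) 0 with h | h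
    · simp [h, mul_nonneg (mul_nonneg hR0 hR0) (hr_nonneg x)]
    · have hb := hr_ne_bound x h
      rw [Real.norm_eq_abs, abs_mul, abs_of_nonneg (hr_nonneg x), abs_mul]
      refine mul_le_mul_of_nonneg_right ?_ (hr_nonneg x)
      have hi : |x i| ≤ R := le_trans (by simpa using norm_le_pi_norm x i) hb
      have hj : |x j| ≤ R := le_trans (by simpa using norm_le_pi_norm x j) hb
      exact mul_le_mul hi hj (abs_nonneg _) hR0
  -- expanding f * A
  have hexp : ∀ (f : (Fin n → ℝ) → ℝ) (x : Fin n → ℝ), f x * A x =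
      c * f x + (m - 1) * ((∑ i, θ i * (x i * f x)) + ∑ i, ∑ j, Θ i j * (x i * x j * f x)) := by
    intro f x
    have h1 : (θ ⬝ᵥ x) * f x = ∑ i, θ i * (x i * f x) := by
      rw [dotProduct, Finset.sum_mul]
      exact Finset.sum_congr rfl fun i _ => by ring
    have h2 : (x ⬝ᵥ Θ.mulVec x) * f x = ∑ i, ∑ j, Θ i j * (x i * x j * f x) := by
      simp only [dotProduct, Matrix.mulVec, Finset.sum_mul, Finset.mul_sum]
      exact Finset.sum_congr rfl fun i _ => Finset.sum_congr rfl fun j _ => by ring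
    calc f x * A x = c * f x + (m - 1) * ((θ ⬝ᵥ x) * f x + (x ⬝ᵥ Θ.mulVec x) * f x) := by
          simp only [hA_def]; ring
      _ = _ := by rw [h1, h2]
  have hsplitInt : ∀ f : (Fin n → ℝ) → ℝ, Integrable f →
      (∀ i, Integrable fun x : Fin n → ℝ => x i * f x) →
      (∀ i j, Integrable fun x : Fin n → ℝ => x i * x j * f x) →
      Integrable (fun x => f x * A x) ∧
      ∫ x, f x * A x = c * (∫ x, f x) + (m - 1) * ((∑ i, θ i * ∫ x, x i * f x)
        + ∑ i, ∑ j, Θ i j * ∫ x, x i * x j * f x) := by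
    intro f hf h1 h2
    have hS1 : Integrable (fun x : Fin n → ℝ => ∑ i, θ i * (x i * f x)) :=
      integrable_finset_sum _ fun i _ => (h1 i).const_mul _
    have hS2 : Integrable (fun x : Fin n → ℝ => ∑ i, ∑ j, Θ i j * (x i * x j * f x)) :=
      integrable_finset_sum _ fun i _ => integrable_finset_sum _ fun j _ => (h2 i j).const_mul _
    have hS12 : Integrable (fun x : Fin n → ℝ => (∑ i, θ i * (x i * f x))
        + ∑ i, ∑ j, Θ i j * (x i * x j * f x)) := hS1.add hS2
    have hS12m : Integrable (fun x : Fin n → ℝ => (m - 1) * ((∑ i, θ i * (x i * f x))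
        + ∑ i, ∑ j, Θ i j * (x i * x j * f x))) := hS12.const_mul _
    have hcf : Integrable (fun x : Fin n → ℝ => c * f x) := hf.const_mul c
    have hint : Integrable (fun x : Fin n → ℝ => c * f x
        + (m - 1) * ((∑ i, θ i * (x i * f x)) + ∑ i, ∑ j, Θ i j * (x i * x j * f x))) :=
      hcf.add hS12m
    constructor
    · exact hint.congr (Filter.Eventually.of_forall fun x => (hexp f x).symm)
    · rw [integral_congr_ae (Filter.Eventually.of_forall (hexp f))]
      rw [integral_add hcf hS12m, integral_const_mul, integral_const_mul,
        integral_add hS1 hS2,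
        integral_finset_sum _ (fun i _ => (h1 i).const_mul _),
        integral_finset_sum (f := fun i a => ∑ j, Θ i j * (a i * a j * f a)) _ (fun i _ => integrable_finset_sum _ fun j _ => (h2 i j).const_mul _)]
      have hin : ∀ i : Fin n, ∫ (a : Fin n → ℝ), (∑ j, Θ i j * (a i * a j * f a))
          = ∑ j, Θ i j * ∫ a, a i * a j * f a := by
        intro i
        rw [integral_finset_sum _ (fun j _ => (h2 i j).const_mul _)]
        exact Finset.sum_congr rfl fun j _ => by rw [integral_const_mul]
      simp only [integral_const_mul, hin]
  obtain ⟨hpA_int, hpA_val⟩ := hsplitInt p hp_int hp_mom1_int hp_mom2_int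
  obtain ⟨hrA_int, hrA_val⟩ := hsplitInt r hr_int hr_mom1_int hr_mom2_int
  have hPR : ∫ x, p x * A x = ∫ x, r x * A x := by
    rw [hpA_val, hrA_val, hp_mass, hr_mass]
    simp only [hmom1, hmom2]
  have hprm : ∫ x, p x * r x ^ (m - 1) = ∫ x, r x ^ m := by
    rw [integral_congr_ae hpA, hPR, integral_congr_ae (Filter.Eventually.of_forall hrA)]
  have hpr_int : Integrable (fun x => p x * r x ^ (m - 1)) := hpA_int.congr hpA.symm
  -- the nonnegative pointwise Bregman function
  have hφ_nonneg : ∀ x, 0 ≤ p x ^ m - r x ^ m - m * (r x ^ (m - 1) * (p x - r x)) := by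
    intro x
    have := bregman_pt_le hm1 (hp_nonneg x) (hr_nonneg x)
    linarith
  have hφ_eq : ∀ x, p x ^ m - r x ^ m - m * (r x ^ (m - 1) * (p x - r x))
      = p x ^ m - r x ^ m - m * (p x * r x ^ (m - 1)) + m * r x ^ m := by
    intro x
    have h := hmul (r x) (hr_nonneg x)
    have h2 : r x ^ (m - 1) * r x = r x ^ m := by rw [mul_comm]; exact h
    nlinarith [h2]
  have hI1 : Integrable (fun x => p x ^ m - r x ^ m) := hpm_int.sub hrm_int
  have hI2 : Integrable (fun x => m * (p x * r x ^ (m - 1))) := hpr_int.const_mul m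
  have hI3 : Integrable (fun x => p x ^ m - r x ^ m - m * (p x * r x ^ (m - 1))) := hI1.sub hI2
  have hI4 : Integrable (fun x => m * r x ^ m) := hrm_int.const_mul m
  have hφ_int : Integrable (fun x => p x ^ m - r x ^ m - m * (r x ^ (m - 1) * (p x - r x))) := by
    have h : Integrable (fun x => p x ^ m - r x ^ m - m * (p x * r x ^ (m - 1)) + m * r x ^ m) :=
      hI3.add hI4
    exact h.congr (Filter.Eventually.of_forall fun x => (hφ_eq x).symm)
  have hφ_sum : ∫ x, (p x ^ m - r x ^ m - m * (r x ^ (m - 1) * (p x - r x)))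
      = (∫ x, p x ^ m) - ∫ x, r x ^ m := by
    rw [integral_congr_ae (Filter.Eventually.of_forall hφ_eq)]
    rw [integral_add hI3 hI4, integral_sub hI1 hI2, integral_sub hpm_int hrm_int,
      integral_const_mul, integral_const_mul, hprm]
    ring
  -- value of the Bregman divergence
  have hBD : BregmanDiv n (2 - m) p r
      = (∫ x, (p x ^ m - r x ^ m - m * (r x ^ (m - 1) * (p x - r x)))) / (m * (m - 1)) := by
    rw [BregmanDiv]
    simp only [e2, e1]
    rw [← integral_div]
    refine integral_congr_ae (Filter.Eventually.of_forall fun x => ?_)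
    have hp' := hmul (p x) (hp_nonneg x)
    show (r x ^ m - p x ^ m) / m - p x * (r x ^ (m - 1) - p x ^ (m - 1)) / (m - 1)
      = (p x ^ m - r x ^ m - m * (r x ^ (m - 1) * (p x - r x))) / (m * (m - 1))
    rw [hφ_eq x, mul_sub (p x), hp']
    field_simp
    ring
  have c1 : BregmanDiv n (2 - m) p r = ((∫ x, p x ^ m) - ∫ x, r x ^ m) / (m * (m - 1)) := by
    rw [hBD, hφ_sum]
  have hGE : ∀ f : (Fin n → ℝ) → ℝ, Integrable f → Integrable (fun x => f x ^ m) →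
      genEntropy n (2 - m) f = ((∫ x, f x ^ m) - ∫ x, f x) / ((1 - m) * m) := by
    intro f hf hfm
    rw [genEntropy]
    simp only [e2, e0]
    rw [integral_div, integral_sub hfm hf]
  have hGEr := hGE r hr_int hrm_int
  have hGEp := hGE p hp_int hpm_int
  have h1m : (1:ℝ) - m ≠ 0 := (by linarith : (1:ℝ) - m < 0).ne
  have c2 : BregmanDiv n (2 - m) p r = genEntropy n (2 - m) r - genEntropy n (2 - m) p := by
    rw [c1, hGEr, hGEp, hp_mass, hr_mass]
    field_simp
    ring
  have hφ0 : 0 ≤ ∫ x, (p x ^ m - r x ^ m - m * (r x ^ (m - 1) * (p x - r x))) :=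
    integral_nonneg fun x => hφ_nonneg x
  have hKpos : (0:ℝ) < m * (m - 1) := mul_pos hm0 hm1pos
  have c3 : 0 ≤ BregmanDiv n (2 - m) p r := by
    rw [hBD]; exact div_nonneg hφ0 hKpos.le
  have c4 : genEntropy n (2 - m) p ≤ genEntropy n (2 - m) r := by
    have h := c3; rw [c2] at h; linarith
  refine ⟨c1, c2, c3, c4, ?_, ?_⟩
  · intro h0
    rw [hBD] at h0
    have hint0 : ∫ x, (p x ^ m - r x ^ m - m * (r x ^ (m - 1) * (p x - r x))) = 0 := by
      rcases div_eq_zero_iff.mp h0 with h | h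
      · exact h
      · exact absurd h hKpos.ne'
    have hae := (integral_eq_zero_iff_of_nonneg (fun x => hφ_nonneg x) hφ_int).mp hint0
    filter_upwards [hae] with x hx
    by_contra hne
    have hlt := bregman_pt_lt hm1 (hp_nonneg x) (hr_nonneg x) hne
    have hx' : p x ^ m - r x ^ m - m * (r x ^ (m - 1) * (p x - r x)) = 0 := by simpa using hx
    linarith
  · intro hpr
    rw [hBD]
    have h0 : ∫ x, (p x ^ m - r x ^ m - m * (r x ^ (m - 1) * (p x - r x))) = 0 := by
      have hae : (fun x => p x ^ m - r x ^ m - m * (r x ^ (m - 1) * (p x - r x)))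
          =ᶠ[MeasureTheory.ae volume] (fun _ => (0:ℝ)) := by
        filter_upwards [hpr] with x hx
        simp [hx]
      rw [integral_congr_ae hae, integral_zero]
    rw [h0, zero_div]
end

section
/- Triangular (generalized Pythagorean) equality for the m-projection onto the q-Gaussian family: let 1 < m < 2, q = 2 − m ∈ (0,1). Let p be a probability density on ℝⁿ with finite first and second moments and ∫ p^m < ∞, let r be a q-Gaussian probability density with the same first and second moments as p and with p = 0 almost everywhere outside { r > 0 }, and let s be any q-Gaussian probability density with p = 0 and r = 0 almost everywhere outside { s > 0 } (and all relevant integrals finite). Then 𝔇[p‖s] = 𝔇[p‖r] + 𝔇[r‖s]. -/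
open MeasureTheory Matrix

lemma posdef_quad_lower (n : ℕ) (M : Matrix (Fin n) (Fin n) ℝ) (hM : M.PosDef) :
    ∃ lam : ℝ, 0 < lam ∧ ∀ x : Fin n → ℝ, lam * (x ⬝ᵥ x) ≤ x ⬝ᵥ M.mulVec x := by
  rcases Nat.eq_zero_or_pos n with hn | hn
  · refine ⟨1, one_pos, fun x => ?_⟩
    subst hn
    have : x = 0 := Subsingleton.elim _ _
    simp [this]
  · have hfc : Continuous fun x : Fin n → ℝ => x ⬝ᵥ M.mulVec x := by
      simp only [dotProduct, Matrix.mulVec]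
      exact continuous_finset_sum _ fun i _ =>
        (continuous_apply i).mul (continuous_finset_sum _ fun j _ =>
          continuous_const.mul (continuous_apply j))
    have hgc : Continuous fun x : Fin n → ℝ => x ⬝ᵥ x := by
      simp only [dotProduct]
      exact continuous_finset_sum _ fun i _ => (continuous_apply i).mul (continuous_apply i)
    set S : Set (Fin n → ℝ) := {x | x ⬝ᵥ x = 1} with hS
    have hS_closed : IsClosed S := isClosed_eq hgc continuous_const
    have hS_sub : S ⊆ Metric.closedBall 0 1 := by
      intro x hx
      rw [Metric.mem_closedBall, dist_zero_right]
      rw [pi_norm_le_iff_of_nonneg zero_le_one]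
      intro i
      rw [Real.norm_eq_abs, abs_le_one_iff_mul_self_le_one]
      calc x i * x i ≤ ∑ j, x j * x j :=
            Finset.single_le_sum (fun j _ => mul_self_nonneg (x j)) (Finset.mem_univ i)
        _ = 1 := hx
    have hS_cpt : IsCompact S :=
      (isCompact_closedBall (0 : Fin n → ℝ) 1).of_isClosed_subset hS_closed hS_sub
    have hS_ne : S.Nonempty := by
      refine ⟨Pi.single ⟨0, hn⟩ 1, ?_⟩
      simp [hS, dotProduct, Pi.single_apply]
    obtain ⟨z, hzS, hz⟩ := hS_cpt.exists_isMinOn hS_ne hfc.continuousOn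
    have hz0 : z ≠ 0 := by
      intro h
      rw [h] at hzS
      simp [hS] at hzS
    have hzpos : 0 < z ⬝ᵥ M.mulVec z := by
      have := hM.dotProduct_mulVec_pos hz0
      simpa using this
    refine ⟨z ⬝ᵥ M.mulVec z, hzpos, fun x => ?_⟩
    by_cases hx0 : x = 0
    · simp [hx0]
    · have ht2 : 0 < x ⬝ᵥ x := by
        have h0 : (0:ℝ) ≤ x ⬝ᵥ x := Finset.sum_nonneg fun i _ => mul_self_nonneg (x i)
        rcases lt_or_eq_of_le h0 with h | h
        · exact h
        · exact absurd (dotProduct_self_eq_zero.mp h.symm) hx0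
      set c : ℝ := (Real.sqrt (x ⬝ᵥ x))⁻¹ with hc
      have hsq : Real.sqrt (x ⬝ᵥ x) > 0 := Real.sqrt_pos.mpr ht2
      have hc2 : c * c * (x ⬝ᵥ x) = 1 := by
        rw [hc, ← mul_inv, Real.mul_self_sqrt ht2.le]
        field_simp
      have hyS : (c • x) ∈ S := by
        simp only [hS, Set.mem_setOf_eq, smul_dotProduct, dotProduct_smul, smul_eq_mul]
        rw [← mul_assoc]; exact hc2
      have hmin := hz hyS
      have h1 : z ⬝ᵥ M.mulVec z ≤ (c • x) ⬝ᵥ M.mulVec (c • x) := hmin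
      rw [Matrix.mulVec_smul, smul_dotProduct, dotProduct_smul, smul_eq_mul, smul_eq_mul,
        ← mul_assoc] at h1
      have hcc : 0 < c * c := by positivity
      calc (z ⬝ᵥ M.mulVec z) * (x ⬝ᵥ x)
          ≤ (c * c * (x ⬝ᵥ M.mulVec x)) * (x ⬝ᵥ x) := by
            apply mul_le_mul_of_nonneg_right h1 ht2.le
        _ = (c * c * (x ⬝ᵥ x)) * (x ⬝ᵥ M.mulVec x) := by ring
        _ = x ⬝ᵥ M.mulVec x := by rw [hc2, one_mul]

lemma qGauss_support_bound (n : ℕ) (q c : ℝ) (hq : 0 < 1 - q) (θ : Fin n → ℝ)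
    (Θ : Matrix (Fin n) (Fin n) ℝ) (hΘ : (-Θ).PosDef)
    (r : (Fin n → ℝ) → ℝ)
    (hr : ∀ x, r x = max 0 (c + (1 - q) * (θ ⬝ᵥ x + x ⬝ᵥ Θ.mulVec x)) ^ (1 / (1 - q))) :
    ∃ R : ℝ, 0 ≤ R ∧ ∀ x, r x ≠ 0 → ∀ i, |x i| ≤ R := by
  obtain ⟨lam, hlam, hlb⟩ := posdef_quad_lower n (-Θ) hΘ
  set K : ℝ := ∑ i, |θ i| with hK
  have hK0 : 0 ≤ K := Finset.sum_nonneg fun i _ => abs_nonneg _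
  set μ : ℝ := (1 - q) * lam with hμdef
  have hμ : 0 < μ := mul_pos hq hlam
  set Kq : ℝ := (1 - q) * K with hKq
  have hKq0 : 0 ≤ Kq := mul_nonneg hq.le hK0
  refine ⟨(|c| + Kq + μ) / μ, by positivity, fun x hx i => ?_⟩
  have hA : 0 < c + (1 - q) * (θ ⬝ᵥ x + x ⬝ᵥ Θ.mulVec x) := by
    by_contra h
    push_neg at h
    apply hx
    rw [hr x, max_eq_left h, Real.zero_rpow]
    positivity
  set t : ℝ := Real.sqrt (x ⬝ᵥ x) with ht
  have ht0 : 0 ≤ t := Real.sqrt_nonneg _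
  have hxx : (0:ℝ) ≤ x ⬝ᵥ x := Finset.sum_nonneg fun i _ => mul_self_nonneg (x i)
  have ht2 : t ^ 2 = x ⬝ᵥ x := Real.sq_sqrt hxx
  have hxj : ∀ j, |x j| ≤ t := fun j => by
    rw [ht, ← Real.sqrt_sq_eq_abs]
    apply Real.sqrt_le_sqrt
    rw [sq]
    exact Finset.single_le_sum (fun k _ => mul_self_nonneg (x k)) (Finset.mem_univ j)
  have hθx : θ ⬝ᵥ x ≤ K * t := by
    rw [hK, Finset.sum_mul]
    apply Finset.sum_le_sum
    intro j _
    calc θ j * x j ≤ |θ j * x j| := le_abs_self _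
      _ = |θ j| * |x j| := abs_mul _ _
      _ ≤ |θ j| * t := mul_le_mul_of_nonneg_left (hxj j) (abs_nonneg _)
  have hquad : lam * (x ⬝ᵥ x) ≤ -(x ⬝ᵥ Θ.mulVec x) := by
    have := hlb x
    rwa [Matrix.neg_mulVec, dotProduct_neg] at this
  have hkey : μ * t ^ 2 < |c| + Kq * t := by
    rw [ht2, hμdef, hKq]
    nlinarith [le_abs_self c, hA, hθx, hquad]
  calc |x i| ≤ t := hxj i
    _ ≤ (|c| + Kq + μ) / μ := by
        rw [le_div_iff₀ hμ]
        nlinarith [hkey, ht0, hμ, hKq0, abs_nonneg c, mul_nonneg (mul_nonneg hμ.le ht0) ht0]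

/-- Triangular (generalized Pythagorean) equality for the m-projection onto the
q-Gaussian family: if `r` is a q-Gaussian with the same first and second moments as `p`
and `s` is any q-Gaussian (with suitable support and integrability conditions), then
`𝔇[p‖s] = 𝔇[p‖r] + 𝔇[r‖s]`. -/
theorem triangular_equality_m_projection (n : ℕ) (m q : ℝ)
    (hm1 : 1 < m) (hm2 : m < 2) (hq : q = 2 - m)
    (p r s : (Fin n → ℝ) → ℝ)
    -- p is a probability density with finite first and second moments and ∫ p^m < ∞
    (hp_nonneg : ∀ x, 0 ≤ p x) (hp_int : Integrable p) (hp_mass : ∫ x, p x = 1)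
    (hpm_int : Integrable (fun x => p x ^ m))
    (hp_mom1_int : ∀ i, Integrable (fun x => x i * p x))
    (hp_mom2_int : ∀ i j, Integrable (fun x => x i * x j * p x))
    -- r is a q-Gaussian density
    (c₁ : ℝ) (θ₁ : Fin n → ℝ) (Θ₁ : Matrix (Fin n) (Fin n) ℝ)
    (hΘ₁symm : Θ₁.IsSymm) (hΘ₁neg : (-Θ₁).PosDef)
    (hr : ∀ x, r x = max 0 (c₁ + (1 - q) * (θ₁ ⬝ᵥ x + x ⬝ᵥ Θ₁.mulVec x)) ^ (1 / (1 - q)))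
    (hr_int : Integrable r) (hr_mass : ∫ x, r x = 1)
    -- r has the same first and second moments as p (r is the m-projection of p)
    (hmom1 : ∀ i, (∫ x, x i * p x) = ∫ x, x i * r x)
    (hmom2 : ∀ i j, (∫ x, x i * x j * p x) = ∫ x, x i * x j * r x)
    -- p vanishes a.e. outside the support of r
    (hpr_supp : ∀ᵐ x ∂volume, r x = 0 → p x = 0)
    -- s is a q-Gaussian density
    (c₂ : ℝ) (θ₂ : Fin n → ℝ) (Θ₂ : Matrix (Fin n) (Fin n) ℝ)
    (hΘ₂symm : Θ₂.IsSymm) (hΘ₂neg : (-Θ₂).PosDef)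
    (hs : ∀ x, s x = max 0 (c₂ + (1 - q) * (θ₂ ⬝ᵥ x + x ⬝ᵥ Θ₂.mulVec x)) ^ (1 / (1 - q)))
    (hs_int : Integrable s) (hs_mass : ∫ x, s x = 1)
    -- p and r vanish a.e. outside the support of s
    (hps_supp : ∀ᵐ x ∂volume, s x = 0 → p x = 0)
    (hrs_supp : ∀ᵐ x ∂volume, s x = 0 → r x = 0)
    -- all relevant integrals are finite
    (hrm_int : Integrable (fun x => r x ^ m))
    (hsm_int : Integrable (fun x => s x ^ m))
    (hps_int : Integrable (fun x =>
      (s x ^ (2 - q) - p x ^ (2 - q)) / (2 - q)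
        - p x * (s x ^ (1 - q) - p x ^ (1 - q)) / (1 - q)))
    (hpr_int : Integrable (fun x =>
      (r x ^ (2 - q) - p x ^ (2 - q)) / (2 - q)
        - p x * (r x ^ (1 - q) - p x ^ (1 - q)) / (1 - q)))
    (hrs_int : Integrable (fun x =>
      (s x ^ (2 - q) - r x ^ (2 - q)) / (2 - q)
        - r x * (s x ^ (1 - q) - r x ^ (1 - q)) / (1 - q))) :
    BregmanDiv n q p s = BregmanDiv n q p r + BregmanDiv n q r s := by
  have h1q : 0 < 1 - q := by rw [hq]; linarith
  have h2q : 0 < 2 - q := by rw [hq]; linarith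
  have h1q' : (1 - q) ≠ 0 := ne_of_gt h1q
  have h2q' : (2 - q) ≠ 0 := ne_of_gt h2q
  have hr_nonneg : ∀ x, 0 ≤ r x := fun x => by
    rw [hr x]; exact Real.rpow_nonneg (le_max_left _ _) _
  have hs_nonneg : ∀ x, 0 ≤ s x := fun x => by
    rw [hs x]; exact Real.rpow_nonneg (le_max_left _ _) _
  set A₁ : (Fin n → ℝ) → ℝ := fun x => c₁ + (1 - q) * (θ₁ ⬝ᵥ x + x ⬝ᵥ Θ₁.mulVec x) with hA₁
  set A₂ : (Fin n → ℝ) → ℝ := fun x => c₂ + (1 - q) * (θ₂ ⬝ᵥ x + x ⬝ᵥ Θ₂.mulVec x) with hA₂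
  have hr_pow : ∀ x, r x ≠ 0 → r x ^ (1 - q) = A₁ x := by
    intro x hx
    have hrx : r x = max 0 (A₁ x) ^ (1 / (1 - q)) := hr x
    have hApos : 0 < A₁ x := by
      by_contra h
      push_neg at h
      exact hx (by rw [hrx, max_eq_left h, Real.zero_rpow (by positivity)])
    rw [hrx, max_eq_right hApos.le, ← Real.rpow_mul hApos.le, one_div_mul_cancel h1q',
      Real.rpow_one]
  have hs_pow : ∀ x, s x ≠ 0 → s x ^ (1 - q) = A₂ x := by
    intro x hx
    have hsx : s x = max 0 (A₂ x) ^ (1 / (1 - q)) := hs x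
    have hApos : 0 < A₂ x := by
      by_contra h
      push_neg at h
      exact hx (by rw [hsx, max_eq_left h, Real.zero_rpow (by positivity)])
    rw [hsx, max_eq_right hApos.le, ← Real.rpow_mul hApos.le, one_div_mul_cancel h1q',
      Real.rpow_one]
  -- moments of r are integrable, via boundedness of the support of r
  obtain ⟨R, hR0, hRbound⟩ := qGauss_support_bound n q c₁ h1q θ₁ Θ₁ hΘ₁neg r hr
  have hr_mom1 : ∀ i, Integrable (fun x : Fin n → ℝ => x i * r x) := by
    intro i
    apply (hr_int.const_mul R).mono
      ((continuous_apply i).aestronglyMeasurable.mul hr_int.1)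
    filter_upwards with x
    show ‖x i * r x‖ ≤ ‖R * r x‖
    by_cases hx : r x = 0
    · simp [hx]
    · rw [Real.norm_eq_abs, Real.norm_eq_abs, abs_mul, abs_mul,
        abs_of_nonneg (hr_nonneg x), abs_of_nonneg hR0]
      exact mul_le_mul_of_nonneg_right (hRbound x hx i) (hr_nonneg x)
  have hr_mom2 : ∀ i j, Integrable (fun x : Fin n → ℝ => x i * x j * r x) := by
    intro i j
    apply (hr_int.const_mul (R * R)).mono
      (((continuous_apply i).mul (continuous_apply j)).aestronglyMeasurable.mul hr_int.1)
    filter_upwards with x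
    show ‖x i * x j * r x‖ ≤ ‖R * R * r x‖
    by_cases hx : r x = 0
    · simp [hx]
    · rw [Real.norm_eq_abs, Real.norm_eq_abs, abs_mul, abs_mul, abs_mul,
        abs_of_nonneg (hr_nonneg x), abs_of_nonneg (mul_nonneg hR0 hR0)]
      exact mul_le_mul_of_nonneg_right
        (mul_le_mul (hRbound x hx i) (hRbound x hx j) (abs_nonneg _) hR0) (hr_nonneg x)
  -- the difference of integrands equals T a.e.
  set T : (Fin n → ℝ) → ℝ := fun x => (r x - p x) * ((A₂ x - A₁ x) / (1 - q)) with hT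
  have hae : ∀ᵐ x ∂(volume : Measure (Fin n → ℝ)),
      ((s x ^ (2 - q) - p x ^ (2 - q)) / (2 - q)
          - p x * (s x ^ (1 - q) - p x ^ (1 - q)) / (1 - q))
        - ((r x ^ (2 - q) - p x ^ (2 - q)) / (2 - q)
          - p x * (r x ^ (1 - q) - p x ^ (1 - q)) / (1 - q))
        - ((s x ^ (2 - q) - r x ^ (2 - q)) / (2 - q)
          - r x * (s x ^ (1 - q) - r x ^ (1 - q)) / (1 - q))
      = T x := by
    filter_upwards [hpr_supp, hps_supp, hrs_supp] with x h1 h2 h3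
    show _ = (r x - p x) * ((A₂ x - A₁ x) / (1 - q))
    by_cases hsx : s x = 0
    · have hpx := h2 hsx
      have hrx := h3 hsx
      rw [hsx, hpx, hrx]
      simp [Real.zero_rpow h2q', Real.zero_rpow h1q']
    · have hS1 : s x ^ (1 - q) = A₂ x := hs_pow x hsx
      by_cases hrx : r x = 0
      · have hpx := h1 hrx
        rw [hrx, hpx]
        simp only [Real.zero_rpow h2q', Real.zero_rpow h1q', zero_mul, sub_zero, zero_sub,
          sub_self, zero_div, mul_zero, zero_div]
      · have hR1 : r x ^ (1 - q) = A₁ x := hr_pow x hrx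
        have hrpos : 0 < r x := (hr_nonneg x).lt_of_ne (Ne.symm hrx)
        have hR2 : r x ^ (2 - q) = r x * A₁ x := by
          have h21 : (2 - q) = 1 + (1 - q) := by ring
          rw [h21, Real.rpow_add hrpos, Real.rpow_one, hR1]
        rw [hS1, hR1, hR2]
        field_simp
        ring
  -- T decomposes into moment terms
  have hT_eq : ∀ x : Fin n → ℝ, T x =
      (c₂ - c₁) / (1 - q) * (r x - p x)
      + (∑ i, (θ₂ i - θ₁ i) * (x i * r x - x i * p x))
      + ∑ i, ∑ j, (Θ₂ i j - Θ₁ i j) * (x i * x j * r x - x i * x j * p x) := by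
    intro x
    have hdiff : A₂ x - A₁ x = (c₂ - c₁)
        + (1 - q) * ((∑ i, (θ₂ i - θ₁ i) * x i)
          + ∑ i, ∑ j, (Θ₂ i j - Θ₁ i j) * (x i * x j)) := by
      have hdd : ∀ (M : Matrix (Fin n) (Fin n) ℝ),
          x ⬝ᵥ M.mulVec x = ∑ i, ∑ j, M i j * (x i * x j) := by
        intro M
        simp only [dotProduct, Matrix.mulVec, Finset.mul_sum]
        exact Finset.sum_congr rfl fun i _ => Finset.sum_congr rfl fun j _ => by ring
      show c₂ + (1 - q) * (θ₂ ⬝ᵥ x + x ⬝ᵥ Θ₂.mulVec x)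
          - (c₁ + (1 - q) * (θ₁ ⬝ᵥ x + x ⬝ᵥ Θ₁.mulVec x)) = _
      rw [hdd Θ₂, hdd Θ₁]
      simp only [dotProduct, sub_mul, Finset.sum_sub_distrib]
      ring
    have e1 : (r x - p x) * (∑ i, (θ₂ i - θ₁ i) * x i)
        = ∑ i, (θ₂ i - θ₁ i) * (x i * r x - x i * p x) := by
      rw [Finset.mul_sum]
      exact Finset.sum_congr rfl fun i _ => by ring
    have e2 : (r x - p x) * (∑ i, ∑ j, (Θ₂ i j - Θ₁ i j) * (x i * x j))
        = ∑ i, ∑ j, (Θ₂ i j - Θ₁ i j) * (x i * x j * r x - x i * x j * p x) := by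
      rw [Finset.mul_sum]
      refine Finset.sum_congr rfl fun i _ => ?_
      rw [Finset.mul_sum]
      exact Finset.sum_congr rfl fun j _ => by ring
    show (r x - p x) * ((A₂ x - A₁ x) / (1 - q)) = _
    rw [hdiff, ← e1, ← e2]
    field_simp
    ring
  -- each moment term integrates to zero
  have hint1 : ∀ i, Integrable (fun x : Fin n → ℝ =>
      (θ₂ i - θ₁ i) * (x i * r x - x i * p x)) := fun i =>
    (((hr_mom1 i).sub (hp_mom1_int i)).const_mul _)
  have hint2 : ∀ i j, Integrable (fun x : Fin n → ℝ =>
      (Θ₂ i j - Θ₁ i j) * (x i * x j * r x - x i * x j * p x)) := fun i j =>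
    (((hr_mom2 i j).sub (hp_mom2_int i j)).const_mul _)
  have hT_int0 : Integrable (fun x : Fin n → ℝ => (c₂ - c₁) / (1 - q) * (r x - p x)) :=
    ((hr_int.sub hp_int).const_mul _)
  have hT_int1 : Integrable (fun x : Fin n → ℝ =>
      ∑ i, (θ₂ i - θ₁ i) * (x i * r x - x i * p x)) :=
    integrable_finset_sum _ fun i _ => hint1 i
  have hT_int2 : Integrable (fun x : Fin n → ℝ =>
      ∑ i, ∑ j, (Θ₂ i j - Θ₁ i j) * (x i * x j * r x - x i * x j * p x)) :=
    integrable_finset_sum _ fun i _ => integrable_finset_sum _ fun j _ => hint2 i j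
  have hTzero : ∫ x, T x = 0 := by
    have hstep : ∫ x, T x = ∫ x, (((c₂ - c₁) / (1 - q) * (r x - p x)
        + (∑ i, (θ₂ i - θ₁ i) * (x i * r x - x i * p x)))
        + ∑ i, ∑ j, (Θ₂ i j - Θ₁ i j) * (x i * x j * r x - x i * x j * p x)) :=
      integral_congr_ae (Filter.Eventually.of_forall fun x => by rw [hT_eq x])
    have hT_int01 : Integrable (fun x : Fin n → ℝ => (c₂ - c₁) / (1 - q) * (r x - p x)
        + ∑ i, (θ₂ i - θ₁ i) * (x i * r x - x i * p x)) := hT_int0.add hT_int1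
    rw [hstep, integral_add hT_int01 hT_int2, integral_add hT_int0 hT_int1]
    have z0 : ∫ x, (c₂ - c₁) / (1 - q) * (r x - p x) = 0 := by
      rw [MeasureTheory.integral_const_mul, integral_sub hr_int hp_int, hr_mass, hp_mass]
      ring
    have z1 : ∫ x, (∑ i, (θ₂ i - θ₁ i) * (x i * r x - x i * p x)) = 0 := by
      rw [integral_finset_sum _ fun i _ => hint1 i]
      refine Finset.sum_eq_zero fun i _ => ?_
      rw [MeasureTheory.integral_const_mul, integral_sub (hr_mom1 i) (hp_mom1_int i), ← hmom1 i, sub_self,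
        mul_zero]
    have z2 : ∫ x, (∑ i, ∑ j, (Θ₂ i j - Θ₁ i j) * (x i * x j * r x - x i * x j * p x)) = 0 := by
      rw [integral_finset_sum _ fun i _ => integrable_finset_sum _ fun j _ => hint2 i j]
      refine Finset.sum_eq_zero fun i _ => ?_
      rw [integral_finset_sum _ fun j _ => hint2 i j]
      refine Finset.sum_eq_zero fun j _ => ?_
      rw [MeasureTheory.integral_const_mul, integral_sub (hr_mom2 i j) (hp_mom2_int i j), ← hmom2 i j,
        sub_self, mul_zero]
    rw [z0, z1, z2]
    ring
  -- conclude
  have hI1 : Integrable (fun x : Fin n → ℝ =>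
      ((s x ^ (2 - q) - p x ^ (2 - q)) / (2 - q)
          - p x * (s x ^ (1 - q) - p x ^ (1 - q)) / (1 - q))
        - ((r x ^ (2 - q) - p x ^ (2 - q)) / (2 - q)
          - p x * (r x ^ (1 - q) - p x ^ (1 - q)) / (1 - q))) := hps_int.sub hpr_int
  have e2 : ∫ x, (((s x ^ (2 - q) - p x ^ (2 - q)) / (2 - q)
          - p x * (s x ^ (1 - q) - p x ^ (1 - q)) / (1 - q))
        - ((r x ^ (2 - q) - p x ^ (2 - q)) / (2 - q)
          - p x * (r x ^ (1 - q) - p x ^ (1 - q)) / (1 - q))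
        - ((s x ^ (2 - q) - r x ^ (2 - q)) / (2 - q)
          - r x * (s x ^ (1 - q) - r x ^ (1 - q)) / (1 - q)))
      = BregmanDiv n q p s - BregmanDiv n q p r - BregmanDiv n q r s := by
    unfold BregmanDiv
    rw [integral_sub hI1 hrs_int, integral_sub hps_int hpr_int]
  have e1 : ∫ x, (((s x ^ (2 - q) - p x ^ (2 - q)) / (2 - q)
          - p x * (s x ^ (1 - q) - p x ^ (1 - q)) / (1 - q))
        - ((r x ^ (2 - q) - p x ^ (2 - q)) / (2 - q)
          - p x * (r x ^ (1 - q) - p x ^ (1 - q)) / (1 - q))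
        - ((s x ^ (2 - q) - r x ^ (2 - q)) / (2 - q)
          - r x * (s x ^ (1 - q) - r x ^ (1 - q)) / (1 - q)))
      = ∫ x, T x := integral_congr_ae hae
  have := e1.symm.trans e2
  rw [hTzero] at this
  linarith
end
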